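/- arXiv:2511.07018 — 3 statements merged into one kernel-verified Lean document; each statement's English description precedes it below -/
import Mathlib

section
/- Let G be a group generated by a finite set X whose growth is subexponential, i.e. (log γ_X(n))/n → 0 as n → ∞, and let N be a normal subgroup of G such that G/N is isomorphic to ℤ. Then N is finitely generated. -/
/-- The word length of `g` with respect to the generating set `X`: the least `n`
such that `g` is a product of `n` elements of `X ∪ X⁻¹` (with length `0` for `1`). -/
noncomputable def wordLength {G : Type*} [Group G] (X : Set G) (g : G) : ℕ :=
  sInf {n : ℕ | ∃ l : List G, l.length = n ∧ (∀ x ∈ l, x ∈ X ∨ x⁻¹ ∈ X) ∧ l.prod = g}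

/-- The growth function `γ_X(n) = |{g ∈ G : ℓ_X(g) ≤ n}|`. -/
noncomputable def growth {G : Type*} [Group G] (X : Set G) (n : ℕ) : ℕ :=
  Set.ncard {g : G | wordLength X g ≤ n}

namespace MilnorAux
variable {G : Type*} [Group G]

/-! ### Word length basics -/

lemma exists_word (X : Set G) (hX : Subgroup.closure X = ⊤) (g : G) :
    ∃ l : List G, l.length = wordLength X g ∧ (∀ x ∈ l, x ∈ X ∨ x⁻¹ ∈ X) ∧ l.prod = g := by
  have hg : g ∈ Subgroup.closure X := hX ▸ Subgroup.mem_top g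
  rw [← Subgroup.mem_toSubmonoid, Subgroup.closure_toSubmonoid] at hg
  obtain ⟨l, hl, hp⟩ := Submonoid.exists_list_of_mem_closure hg
  have hl' : ∀ x ∈ l, x ∈ X ∨ x⁻¹ ∈ X := by
    intro x hx
    rcases hl x hx with h | h
    · exact Or.inl h
    · exact Or.inr (by simpa using h)
  have hne : Set.Nonempty {n : ℕ | ∃ l : List G, l.length = n ∧ (∀ x ∈ l, x ∈ X ∨ x⁻¹ ∈ X) ∧ l.prod = g} :=
    ⟨l.length, l, rfl, hl', hp⟩
  exact Nat.sInf_mem hne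

lemma wordLength_le (X : Set G) (l : List G) (hl : ∀ x ∈ l, x ∈ X ∨ x⁻¹ ∈ X) :
    wordLength X l.prod ≤ l.length :=
  Nat.sInf_le ⟨l, rfl, hl, rfl⟩

lemma ball_finite (X : Finset G) (hX : Subgroup.closure (X : Set G) = ⊤) (m : ℕ) :
    {g : G | wordLength (X : Set G) g ≤ m}.Finite := by
  classical
  set S : Set G := (X : Set G) ∪ (X : Set G)⁻¹ with hS
  have hSfin : S.Finite := (X.finite_toSet).union (X.finite_toSet.inv)
  haveI : Finite S := hSfin.to_subtype
  have hlist : {l : List G | l.length ≤ m ∧ ∀ x ∈ l, x ∈ S}.Finite := by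
    have himg : {l : List G | l.length ≤ m ∧ ∀ x ∈ l, x ∈ S} ⊆
        (fun l' : List S => l'.map Subtype.val) '' {l' : List S | l'.length ≤ m} := by
      rintro l ⟨hlen, hmem⟩
      have key : ∀ l : List G, (∀ x ∈ l, x ∈ S) → ∃ l' : List S, l'.map Subtype.val = l := by
        intro l
        induction l with
        | nil => exact fun _ => ⟨[], rfl⟩
        | cons a t ih =>
          intro h
          obtain ⟨l', hl'⟩ := ih fun x hx => h x (List.mem_cons_of_mem _ hx)
          exact ⟨⟨a, h a List.mem_cons_self⟩ :: l', by simp [hl']⟩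
      obtain ⟨l', hl'⟩ := key l hmem
      exact ⟨l', by simp [← hl'] at hlen ⊢; exact hlen, hl'⟩
    exact Set.Finite.subset (Set.Finite.image _ (List.finite_length_le _ m)) himg
  apply Set.Finite.subset (hlist.image fun l => l.prod)
  intro g hg
  obtain ⟨l, hlen, hmem, hprod⟩ := exists_word (X : Set G) hX g
  refine ⟨l, ⟨hlen.le.trans hg, ?_⟩, hprod⟩
  intro x hx
  rcases hmem x hx with h | h
  · exact Or.inl h
  · exact Or.inr (Set.mem_inv.2 (by simpa using h))

lemma wordLength_one (X : Set G) : wordLength X 1 = 0 :=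
  Nat.le_zero.mp (wordLength_le X [] (by simp))

lemma wordLength_pos (X : Set G) (hX : Subgroup.closure X = ⊤) {t : G} (ht : t ≠ 1) :
    1 ≤ wordLength X t := by
  by_contra h
  push_neg at h
  obtain ⟨l, hlen, -, hprod⟩ := exists_word X hX t
  have h0 : wordLength X t = 0 := by omega
  rw [h0, List.length_eq_zero_iff] at hlen
  subst hlen
  exact ht hprod.symm

lemma wordLength_mul_le (X : Set G) (hX : Subgroup.closure X = ⊤) (g h : G) :
    wordLength X (g * h) ≤ wordLength X g + wordLength X h := by
  obtain ⟨l₁, hl₁, hm₁, hp₁⟩ := exists_word X hX g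
  obtain ⟨l₂, hl₂, hm₂, hp₂⟩ := exists_word X hX h
  have := wordLength_le X (l₁ ++ l₂) (by
    intro x hx; rcases List.mem_append.1 hx with h | h
    · exact hm₁ x h
    · exact hm₂ x h)
  simpa [hp₁, hp₂, hl₁, hl₂] using this

/-! ### Milnor words -/

/-- The Milnor word associated to a boolean list. -/
def W (u t : G) (l : List Bool) : G := (l.map fun b => (if b then u else 1) * t).prod

lemma W_nil (u t : G) : W u t [] = 1 := rfl

lemma W_cons (u t : G) (b : Bool) (l : List Bool) :
    W u t (b :: l) = (if b then u else 1) * t * W u t l := by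
  simp [W]

lemma W_append (u t : G) (l₁ l₂ : List Bool) :
    W u t (l₁ ++ l₂) = W u t l₁ * W u t l₂ := by
  simp [W]

lemma W_wordLength_le (X : Set G) (hX : Subgroup.closure X = ⊤) (u t : G) (l : List Bool) :
    wordLength X (W u t l) ≤ l.length * (wordLength X u + wordLength X t) := by
  induction l with
  | nil => simp [W, wordLength_one]
  | cons b l ih =>
    rw [W_cons]
    calc wordLength X ((if b then u else 1) * t * W u t l)
        ≤ wordLength X ((if b then u else 1) * t) + wordLength X (W u t l) :=
          wordLength_mul_le X hX _ _
      _ ≤ (wordLength X (if b then u else 1) + wordLength X t) + wordLength X (W u t l) := by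
          exact add_le_add_left (wordLength_mul_le X hX _ _) _
      _ ≤ (wordLength X u + wordLength X t) + l.length * (wordLength X u + wordLength X t) := by
          refine add_le_add (add_le_add_left ?_ _) ih
          by_cases hb : b <;> simp [hb, wordLength_one]
      _ = (b :: l).length * (wordLength X u + wordLength X t) := by
          simp [List.length_cons]; ring

/-! ### Conjugate sets -/

/-- Conjugates of `u` by powers `t^i`, `a ≤ i ≤ b`. -/
def cset (u t : G) (a b : ℤ) : Set G := {g | ∃ i : ℤ, a ≤ i ∧ i ≤ b ∧ g = t ^ i * u * (t ^ i)⁻¹}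

lemma cset_mono (u t : G) {a b a' b' : ℤ} (ha : a' ≤ a) (hb : b ≤ b') :
    cset u t a b ⊆ cset u t a' b' := by
  rintro g ⟨i, h1, h2, rfl⟩
  exact ⟨i, ha.trans h1, h2.trans hb, rfl⟩

lemma conj_conj (t u : G) (a b : ℤ) :
    t ^ a * (t ^ b * u * (t ^ b)⁻¹) * (t ^ a)⁻¹ = t ^ (a + b) * u * (t ^ (a + b))⁻¹ := by
  rw [zpow_add]; group

lemma conj_closure_le (t : G) (s : Set G) (T : Subgroup G)
    (hs : ∀ g ∈ s, t * g * t⁻¹ ∈ T) {h : G} (hh : h ∈ Subgroup.closure s) :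
    t * h * t⁻¹ ∈ T := by
  have : t * h * t⁻¹ ∈ (Subgroup.closure s).map (MulAut.conj t).toMonoidHom :=
    ⟨h, hh, rfl⟩
  rw [MonoidHom.map_closure] at this
  refine Subgroup.closure_le T |>.2 ?_ this
  rintro g ⟨x, hx, rfl⟩
  exact hs x hx

lemma W_shift (u t : G) : ∀ l : List Bool,
    W u t l * (t ^ (l.length : ℤ))⁻¹ ∈ Subgroup.closure (cset u t 0 ((l.length : ℤ) - 1)) := by
  intro l
  induction l with
  | nil => simpa [W_nil] using Subgroup.one_mem _
  | cons b l ih =>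
    have hlen : ((b :: l).length : ℤ) = (l.length : ℤ) + 1 := by push_cast [List.length_cons]; ring
    have key : W u t (b :: l) * (t ^ ((b :: l).length : ℤ))⁻¹
        = (if b then u else 1) * (t * (W u t l * (t ^ (l.length : ℤ))⁻¹) * t⁻¹) := by
      rw [W_cons, hlen, zpow_add_one]
      group
    rw [key]
    refine Subgroup.mul_mem _ ?_ ?_
    · by_cases hb : b <;> simp only [hb, if_true, if_false]
      · refine Subgroup.subset_closure ⟨0, le_refl 0, ?_, by simp⟩
        push_cast [List.length_cons]; omega
      · exact Subgroup.one_mem _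
    · refine conj_closure_le t _ _ ?_ ih
      rintro g ⟨i, h1, h2, rfl⟩
      refine Subgroup.subset_closure ⟨i + 1, by omega, by omega, ?_⟩
      rw [zpow_add_one]
      group

lemma list_split : ∀ l₁ l₂ : List Bool, l₁.length = l₂.length → l₁ ≠ l₂ →
    ∃ (p s₁ s₂ : List Bool) (a b : Bool), a ≠ b ∧ s₁.length = s₂.length ∧
      l₁ = p ++ a :: s₁ ∧ l₂ = p ++ b :: s₂ := by
  intro l₁
  induction l₁ with
  | nil => intro l₂ h hne; cases l₂ <;> simp_all
  | cons a s₁ ih =>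
    intro l₂ h hne
    cases l₂ with
    | nil => simp at h
    | cons b s₂ =>
      by_cases hab : a = b
      · subst hab
        have hs : s₁ ≠ s₂ := by intro hs; exact hne (by rw [hs])
        obtain ⟨p, t₁, t₂, x, y, hxy, hlen, h1, h2⟩ := ih s₂ (by simpa using h) hs
        exact ⟨a :: p, t₁, t₂, x, y, hxy, hlen, by simp [h1], by simp [h2]⟩
      · exact ⟨[], s₁, s₂, a, b, hab, by simpa using h, rfl, rfl⟩

lemma key_lemma (u t : G) (n : ℕ) (l₁ l₂ : List Bool) (h₁ : l₁.length = n)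
    (h₂ : l₂.length = n) (hne : l₁ ≠ l₂) (heq : W u t l₁ = W u t l₂) :
    u ∈ Subgroup.closure (cset u t 1 n) := by
  obtain ⟨p, s₁, s₂, a, b, hab, hlen, e1, e2⟩ := list_split l₁ l₂ (by omega) hne
  -- reduce to the case a = true, b = false
  wlog ha : a = true generalizing l₁ l₂ a b s₁ s₂
  · have hb : b = true := by rcases a <;> rcases b <;> simp_all
    exact this l₂ l₁ h₂ h₁ hne.symm heq.symm s₂ s₁ b a (Ne.symm hab) hlen.symm e2 e1 hb
  have hbf : b = false := by rcases b <;> simp_all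
  subst ha hbf
  rw [e1, e2, W_append, W_append, W_cons, W_cons] at heq
  simp at heq
  have heq2 : u * t * W u t s₁ = t * W u t s₂ := heq
  have h3 : t * W u t s₂ = u * (t * W u t s₁) := by rw [← heq2]; group
  have hu : t * ((W u t s₂ * (t ^ (s₂.length : ℤ))⁻¹) *
      (W u t s₁ * (t ^ (s₂.length : ℤ))⁻¹)⁻¹) * t⁻¹ = u := by
    calc t * ((W u t s₂ * (t ^ (s₂.length : ℤ))⁻¹) *
        (W u t s₁ * (t ^ (s₂.length : ℤ))⁻¹)⁻¹) * t⁻¹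
        = (t * W u t s₂) * ((t ^ (s₂.length : ℤ))⁻¹ * (t ^ (s₂.length : ℤ))) *
          (W u t s₁)⁻¹ * t⁻¹ := by group
      _ = (u * (t * W u t s₁)) * (W u t s₁)⁻¹ * t⁻¹ := by rw [h3]; group
      _ = u := by group
  have hmem : (W u t s₂ * (t ^ (s₂.length : ℤ))⁻¹) *
      (W u t s₁ * (t ^ (s₂.length : ℤ))⁻¹)⁻¹ ∈
      Subgroup.closure (cset u t 0 ((s₁.length : ℤ) - 1)) := by
    refine Subgroup.mul_mem _ ?_ (Subgroup.inv_mem _ (by rw [← hlen]; exact W_shift u t s₁))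
    rw [hlen] at *
    exact W_shift u t s₂
  have hfinal : t * ((W u t s₂ * (t ^ (s₂.length : ℤ))⁻¹) *
      (W u t s₁ * (t ^ (s₂.length : ℤ))⁻¹)⁻¹) * t⁻¹ ∈
      Subgroup.closure (cset u t 1 (n : ℤ)) := by
    refine conj_closure_le t _ _ ?_ hmem
    rintro g ⟨i, hi1, hi2, rfl⟩
    have hn : (s₁.length : ℤ) ≤ (n : ℤ) - 1 := by
      have h4 : l₁.length = p.length + 1 + s₁.length := by rw [e1]; simp; omega
      omega
    refine Subgroup.subset_closure ⟨i + 1, by omega, by omega, ?_⟩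
    rw [zpow_add_one]
    group
  rwa [hu] at hfinal

/-! ### The growth estimate -/

lemma collision (X : Finset G) (hX : Subgroup.closure (X : Set G) = ⊤)
    (hgrowth : Filter.Tendsto
      (fun n : ℕ => Real.log (growth (X : Set G) n) / (n : ℝ))
      Filter.atTop (nhds 0))
    (u t : G) (ht : t ≠ 1) :
    ∃ (n : ℕ) (l₁ l₂ : List Bool), l₁.length = n ∧ l₂.length = n ∧ l₁ ≠ l₂ ∧
      W u t l₁ = W u t l₂ := by
  by_contra hcon
  push_neg at hcon
  set C : ℕ := wordLength (X : Set G) u + wordLength (X : Set G) t with hC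
  have hC1 : 1 ≤ C := le_add_of_nonneg_of_le (Nat.zero_le _) (wordLength_pos _ hX ht)
  have hinj : ∀ n : ℕ, Function.Injective (fun ε : Fin n → Bool => W u t (List.ofFn ε)) := by
    intro n ε δ hεδ
    by_contra hne
    exact (hcon n (List.ofFn ε) (List.ofFn δ) (by simp) (by simp)
      (fun h => hne (List.ofFn_injective h)) hεδ).elim
  have hcard : ∀ n : ℕ, (2 : ℕ) ^ n ≤ growth (X : Set G) (C * n) := by
    intro n
    have hrange : Set.range (fun ε : Fin n → Bool => W u t (List.ofFn ε)) ⊆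
        {g : G | wordLength (X : Set G) g ≤ C * n} := by
      rintro g ⟨ε, rfl⟩
      have := W_wordLength_le (X : Set G) hX u t (List.ofFn ε)
      simpa [mul_comm] using this
    have h1 : (Set.range (fun ε : Fin n → Bool => W u t (List.ofFn ε))).ncard = 2 ^ n := by
      rw [← Nat.card_coe_set_eq, Nat.card_range_of_injective (hinj n)]
      simp [Nat.card_eq_fintype_card]
    calc (2:ℕ)^n = _ := h1.symm
      _ ≤ growth (X : Set G) (C * n) :=
        Set.ncard_le_ncard hrange (ball_finite X hX (C * n))
  have hpos : (0:ℝ) < Real.log 2 / C := by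
    apply div_pos (Real.log_pos (by norm_num))
    exact_mod_cast hC1
  have hsub : Filter.Tendsto (fun n : ℕ => Real.log (growth (X : Set G) (C * n)) / ((C * n : ℕ) : ℝ))
      Filter.atTop (nhds 0) := by
    apply hgrowth.comp
    apply Filter.tendsto_atTop_mono (fun n => Nat.le_mul_of_pos_left n (by omega : 0 < C))
    exact Filter.tendsto_id
  have hge : ∀ᶠ n : ℕ in Filter.atTop, Real.log 2 / C ≤
      Real.log (growth (X : Set G) (C * n)) / ((C * n : ℕ) : ℝ) := by
    filter_upwards [Filter.eventually_ge_atTop 1] with n hn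
    have h2 : ((2:ℕ)^n : ℝ) ≤ (growth (X : Set G) (C * n) : ℝ) := by exact_mod_cast hcard n
    have hlog : (n : ℝ) * Real.log 2 ≤ Real.log (growth (X : Set G) (C * n)) := by
      have h3 := Real.log_le_log (by positivity) h2
      rwa [Real.log_pow, Nat.cast_ofNat] at h3
    have hCn : (0:ℝ) < ((C * n : ℕ) : ℝ) := by
      have : 0 < C * n := Nat.mul_pos (by omega) (by omega)
      exact_mod_cast this
    rw [div_le_div_iff₀ (by positivity) hCn]
    calc Real.log 2 * ((C * n : ℕ) : ℝ) = ((n : ℝ) * Real.log 2) * (C : ℝ) := by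
          push_cast; ring
      _ ≤ Real.log (growth (X : Set G) (C * n)) * (C : ℝ) :=
          mul_le_mul_of_nonneg_right hlog (by positivity)
  have := ge_of_tendsto hsub hge
  linarith

/-- Combination: every `u` lies in the subgroup generated by the conjugates
`t^i u t^{-i}` with `1 ≤ i ≤ m`, for both `t` and `t⁻¹`, for some common `m`. -/
lemma exists_bound (X : Finset G) (hX : Subgroup.closure (X : Set G) = ⊤)
    (hgrowth : Filter.Tendsto
      (fun n : ℕ => Real.log (growth (X : Set G) n) / (n : ℝ))
      Filter.atTop (nhds 0))
    (t : G) (ht : t ≠ 1) (u : G) :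
    ∃ m : ℕ, u ∈ Subgroup.closure (cset u t 1 m) ∧
      u ∈ Subgroup.closure (cset u t⁻¹ 1 m) := by
  obtain ⟨n₁, l₁, l₂, ha, hb, hc, hd⟩ := collision X hX hgrowth u t ht
  have h1 := key_lemma u t n₁ l₁ l₂ ha hb hc hd
  have ht' : t⁻¹ ≠ 1 := by simpa using ht
  obtain ⟨n₂, m₁, m₂, ha', hb', hc', hd'⟩ := collision X hX hgrowth u t⁻¹ ht'
  have h2 := key_lemma u t⁻¹ n₂ m₁ m₂ ha' hb' hc' hd'
  refine ⟨max n₁ n₂, ?_, ?_⟩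
  · exact Subgroup.closure_mono (cset_mono u t le_rfl (by push_cast; omega)) h1
  · exact Subgroup.closure_mono (cset_mono u t⁻¹ le_rfl (by push_cast; omega)) h2

end MilnorAux

open MilnorAux in
/-- Milnor's lemma: if `G = ⟨X⟩` has subexponential growth and `G/N ≅ ℤ`,
then `N` is finitely generated. -/
theorem milnor_lemma {G : Type*} [Group G] (X : Finset G)
    (hX : Subgroup.closure (X : Set G) = ⊤)
    (hgrowth : Filter.Tendsto
      (fun n : ℕ => Real.log (growth (X : Set G) n) / (n : ℝ))
      Filter.atTop (nhds 0))
    (N : Subgroup G) (hN : N.Normal)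
    (hZ : Nonempty ((G ⧸ N) ≃* Multiplicative ℤ)) :
    N.FG := by
  classical
  obtain ⟨e⟩ := hZ
  set φ : G →* Multiplicative ℤ := e.toMonoidHom.comp (QuotientGroup.mk' N) with hφ
  have hker : ∀ g : G, φ g = 1 ↔ g ∈ N := by
    intro g
    rw [hφ]
    simp only [MonoidHom.comp_apply, MulEquiv.coe_toMonoidHom]
    rw [MulEquiv.map_eq_one_iff, QuotientGroup.mk'_apply, QuotientGroup.eq_one_iff]
  obtain ⟨t, htφ⟩ : ∃ t : G, φ t = Multiplicative.ofAdd 1 :=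
    (e.surjective.comp (QuotientGroup.mk'_surjective N)) (Multiplicative.ofAdd 1)
  have ht1 : t ≠ 1 := by
    intro h
    rw [h, map_one] at htφ
    exact one_ne_zero (congrArg Multiplicative.toAdd htφ).symm
  set d : G → ℤ := fun g => Multiplicative.toAdd (φ g) with hd
  have hdt : d t = 1 := by rw [hd]; simp [htφ]
  have hdmul : ∀ g h : G, d (g * h) = d g + d h := by
    intro g h; rw [hd]; simp [map_mul]
  have hφzpow : ∀ (g : G) (k : ℤ), d (g ^ k) = k * d g := by
    intro g k; rw [hd]; simp [map_zpow, toAdd_zpow]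
  -- the bound M
  obtain ⟨f, hf⟩ := Classical.axiom_of_choice
    (fun u : G => exists_bound X hX hgrowth t ht1 u)
  set M : ℕ := X.sup (fun x => f (x * (t ^ (d x))⁻¹)) with hM
  -- the finite generating set E
  set E : Set G :=
    (fun p : G × ℤ => t ^ p.2 * (p.1 * (t ^ (d p.1))⁻¹) * (t ^ p.2)⁻¹) ''
      ((X : Set G) ×ˢ (Set.Icc (-(M : ℤ)) (M : ℤ))) with hE
  have hEfin : E.Finite :=
    ((X.finite_toSet).prod (Set.finite_Icc _ _)).image _
  set H : Subgroup G := Subgroup.closure E with hH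
  -- membership description of E
  have hEmem : ∀ (x : G) (j : ℤ), x ∈ X → -(M : ℤ) ≤ j → j ≤ M →
      t ^ j * (x * (t ^ (d x))⁻¹) * (t ^ j)⁻¹ ∈ H := by
    intro x j hx h1 h2
    exact Subgroup.subset_closure ⟨⟨x, j⟩, ⟨hx, h1, h2⟩, rfl⟩
  -- conjugation invariance
  have hconj : ∀ h ∈ H, t * h * t⁻¹ ∈ H := by
    intro h hh
    refine conj_closure_le t E H ?_ hh
    rintro g ⟨⟨x, j⟩, ⟨hx, hj1, hj2⟩, rfl⟩
    simp only at *
    set u : G := x * (t ^ (d x))⁻¹ with hu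
    by_cases hjM : j + 1 ≤ (M : ℤ)
    · have : t * (t ^ j * u * (t ^ j)⁻¹) * t⁻¹ = t ^ (j+1) * u * (t ^ (j+1))⁻¹ := by
        rw [zpow_add_one]; group
      rw [this]
      exact hEmem x (j+1) hx (by omega) hjM
    · -- j = M : use the t⁻¹ relation
      have hjeq : j = (M : ℤ) := by omega
      subst hjeq
      have hfu : f u ≤ M := Finset.le_sup (f := fun x => f (x * (t ^ (d x))⁻¹)) hx
      have hrel := (hf u).2
      have : t * (t ^ (M : ℤ) * u * (t ^ (M : ℤ))⁻¹) * t⁻¹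
          = t ^ ((M : ℤ) + 1) * u * (t ^ ((M : ℤ) + 1))⁻¹ := by
        rw [zpow_add_one]; group
      rw [this]
      refine conj_closure_le (t ^ ((M : ℤ) + 1)) _ H ?_ hrel
      rintro g ⟨i, hi1, hi2, rfl⟩
      have heq : t ^ ((M : ℤ) + 1) * ((t⁻¹) ^ i * u * ((t⁻¹) ^ i)⁻¹) * (t ^ ((M : ℤ) + 1))⁻¹
          = t ^ ((M : ℤ) + 1 + -i) * u * (t ^ ((M : ℤ) + 1 + -i))⁻¹ := by
        rw [inv_zpow, ← zpow_neg, conj_conj]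
      rw [heq]
      exact hEmem x _ hx (by omega) (by omega)
  have hconj' : ∀ h ∈ H, t⁻¹ * h * t ∈ H := by
    intro h hh
    have := conj_closure_le t⁻¹ E H ?_ hh
    · simpa using this
    rintro g ⟨⟨x, j⟩, ⟨hx, hj1, hj2⟩, rfl⟩
    simp only at *
    set u : G := x * (t ^ (d x))⁻¹ with hu
    by_cases hjM : -(M : ℤ) ≤ j - 1
    · have : t⁻¹ * (t ^ j * u * (t ^ j)⁻¹) * t⁻¹⁻¹ = t ^ (j-1) * u * (t ^ (j-1))⁻¹ := by
        rw [zpow_sub_one]; group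
      rw [this]
      exact hEmem x (j-1) hx hjM (by omega)
    · have hjeq : j = -(M : ℤ) := by omega
      subst hjeq
      have hfu : f u ≤ M := Finset.le_sup (f := fun x => f (x * (t ^ (d x))⁻¹)) hx
      have hrel := (hf u).1
      have : t⁻¹ * (t ^ (-(M : ℤ)) * u * (t ^ (-(M : ℤ)))⁻¹) * t⁻¹⁻¹
          = t ^ (-(M : ℤ) - 1) * u * (t ^ (-(M : ℤ) - 1))⁻¹ := by
        rw [zpow_sub_one]; group
      rw [this]
      refine conj_closure_le (t ^ (-(M : ℤ) - 1)) _ H ?_ hrel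
      rintro g ⟨i, hi1, hi2, rfl⟩
      have heq : t ^ (-(M : ℤ) - 1) * (t ^ i * u * (t ^ i)⁻¹) * (t ^ (-(M : ℤ) - 1))⁻¹
          = t ^ (-(M : ℤ) - 1 + i) * u * (t ^ (-(M : ℤ) - 1 + i))⁻¹ := conj_conj ..
      rw [heq]
      exact hEmem x _ hx (by omega) (by omega)
  -- conjugation by arbitrary powers of t
  have hconjZ : ∀ (k : ℤ), ∀ h ∈ H, t ^ k * h * (t ^ k)⁻¹ ∈ H := by
    intro k
    induction k using Int.induction_on with
    | zero => intro h hh; simpa using hh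
    | succ n ih =>
      intro h hh
      have : t ^ ((n : ℤ) + 1) * h * (t ^ ((n : ℤ) + 1))⁻¹
          = t * (t ^ (n : ℤ) * h * (t ^ (n : ℤ))⁻¹) * t⁻¹ := by
        rw [zpow_add_one]; group
      rw [this]
      exact hconj _ (ih h hh)
    | pred n ih =>
      intro h hh
      have : t ^ (-(n : ℤ) - 1) * h * (t ^ (-(n : ℤ) - 1))⁻¹
          = t⁻¹ * (t ^ (-(n : ℤ)) * h * (t ^ (-(n : ℤ)))⁻¹) * t := by
        rw [zpow_sub_one]; group
      rw [this]
      exact hconj' _ (ih h hh)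
  -- H ≤ N
  have hdinv : ∀ g : G, d g⁻¹ = -(d g) := by
    intro g; rw [hd]; simp [map_inv]
  have hHN : H ≤ N := by
    rw [hH]
    apply (Subgroup.closure_le N).2
    rintro g ⟨⟨x, j⟩, ⟨hx, hj1, hj2⟩, rfl⟩
    simp only
    have h1 : d (t ^ j * (x * (t ^ (d x))⁻¹) * (t ^ j)⁻¹) = 0 := by
      simp only [hdmul, hdinv, hφzpow, hdt]
      ring
    exact (hker _).1 (toAdd_eq_zero.mp h1)
  -- N ≤ H
  have hkeyAll : ∀ g : G, g * (t ^ (d g))⁻¹ ∈ H := by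
    intro g
    have hmemT : g ∈ Subgroup.closure (X : Set G) := hX ▸ Subgroup.mem_top g
    induction hmemT using Subgroup.closure_induction with
    | mem x hx =>
      have : x * (t ^ (d x))⁻¹ = t ^ (0:ℤ) * (x * (t ^ (d x))⁻¹) * (t ^ (0:ℤ))⁻¹ := by
        simp
      rw [this]
      exact hEmem x 0 hx (by omega) (by omega)
    | one =>
      have h1 : d (1 : G) = 0 := by simpa using hdmul 1 1
      rw [h1]
      simpa using Subgroup.one_mem H
    | mul a b ha hb iha ihb =>
      have : a * b * (t ^ (d (a * b)))⁻¹
          = (a * (t ^ (d a))⁻¹) * (t ^ (d a) * (b * (t ^ (d b))⁻¹) * (t ^ (d a))⁻¹) := by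
        rw [hdmul, zpow_add]; group
      rw [this]
      exact Subgroup.mul_mem _ iha (hconjZ (d a) _ ihb)
    | inv a ha iha =>
      have : a⁻¹ * (t ^ (d a⁻¹))⁻¹
          = t ^ (-(d a)) * (a * (t ^ (d a))⁻¹)⁻¹ * (t ^ (-(d a)))⁻¹ := by
        rw [hdinv]; group
      rw [this]
      exact hconjZ _ _ (Subgroup.inv_mem _ iha)
  have hNH : N ≤ H := by
    intro g hg
    have hdg : d g = 0 := toAdd_eq_zero.mpr ((hker g).2 hg)
    have h2 := hkeyAll g
    rw [hdg] at h2
    simpa using h2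
  have hNE : Subgroup.closure E = N := le_antisymm hHN hNH
  exact (Subgroup.fg_iff N).2 ⟨E, hNE, hEfin⟩
end

section
/- Let θ < 1/2 and C ≥ 1 be real numbers, and set C₁ = 2·(5C)^(1/(1−2θ)). Let G be a group generated by a finite set X such that γ_X(n) ≤ exp(C·n^θ) for all n > 0. Let Y be a finite nonempty subset of G and let N = ⟨Y^G⟩ be its normal closure in G. Then there is a finite subset Z of G generating N with ℓ_X(Z) ≤ ℓ_X(Y) + C₁·ℓ_X(Y)^(θ/(1−θ)). -/
set_option maxHeartbeats 1000000

section WL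
variable {G : Type*} [Group G] {X : Set G}

lemma wl_le {g : G} {l : List G} (hl : ∀ x ∈ l, x ∈ X ∨ x⁻¹ ∈ X) (hp : l.prod = g) :
    wordLength X g ≤ l.length :=
  Nat.sInf_le ⟨l, rfl, hl, hp⟩

lemma wl_exists (hX : Subgroup.closure X = ⊤) (g : G) :
    ∃ l : List G, l.length = wordLength X g ∧ (∀ x ∈ l, x ∈ X ∨ x⁻¹ ∈ X) ∧ l.prod = g := by
  have hg : g ∈ Subgroup.closure X := by rw [hX]; trivial
  have hg' : g ∈ Submonoid.closure (X ∪ X⁻¹) := by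
    rw [← Subgroup.closure_toSubmonoid]; exact hg
  obtain ⟨l, hl, hp⟩ := Submonoid.exists_list_of_mem_closure hg'
  have hne : {n : ℕ | ∃ l : List G, l.length = n ∧ (∀ x ∈ l, x ∈ X ∨ x⁻¹ ∈ X) ∧ l.prod = g}.Nonempty := by
    refine ⟨l.length, l, rfl, fun x hx => ?_, hp⟩
    rcases hl x hx with h | h
    · exact Or.inl h
    · exact Or.inr (Set.mem_inv.mp h)
  exact Nat.sInf_mem hne

lemma wl_one : wordLength X (1 : G) = 0 :=
  Nat.le_zero.mp (wl_le (l := []) (by simp) (by simp))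

lemma wl_eq_zero (hX : Subgroup.closure X = ⊤) {g : G} (h : wordLength X g = 0) : g = 1 := by
  obtain ⟨l, hlen, _, hp⟩ := wl_exists hX g
  rw [h, List.length_eq_zero_iff] at hlen
  rw [hlen] at hp; simpa using hp.symm

lemma wl_mul (hX : Subgroup.closure X = ⊤) (g h : G) :
    wordLength X (g * h) ≤ wordLength X g + wordLength X h := by
  obtain ⟨l1, hl1, hc1, hp1⟩ := wl_exists hX g
  obtain ⟨l2, hl2, hc2, hp2⟩ := wl_exists hX h
  have := wl_le (X := X) (g := g * h) (l := l1 ++ l2) ?_ (by rw [List.prod_append, hp1, hp2])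
  · simpa [hl1, hl2] using this
  · intro x hx; rcases List.mem_append.mp hx with h' | h'
    · exact hc1 x h'
    · exact hc2 x h'

lemma wl_inv (hX : Subgroup.closure X = ⊤) (g : G) :
    wordLength X g⁻¹ ≤ wordLength X g := by
  obtain ⟨l, hlen, hc, hp⟩ := wl_exists hX g
  have := wl_le (X := X) (g := g⁻¹) (l := (l.map (fun x => x⁻¹)).reverse) ?_ ?_
  · simpa [hlen] using this
  · intro x hx
    simp only [List.mem_reverse, List.mem_map] at hx
    obtain ⟨a, ha, rfl⟩ := hx
    rcases hc a ha with h' | h'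
    · exact Or.inr (by simpa using h')
    · exact Or.inl h'
  · rw [← List.prod_inv_reverse, hp]

lemma wl_mem {x : G} (hx : x ∈ X) : wordLength X x ≤ 1 :=
  wl_le (l := [x]) (by simpa using Or.inl hx) (by simp)

lemma wl_mem_inv {x : G} (hx : x ∈ X) : wordLength X x⁻¹ ≤ 1 :=
  wl_le (l := [x⁻¹]) (by simpa using Or.inr hx) (by simp)

lemma wl_ball_finite (hX : Subgroup.closure X = ⊤) (hXf : X.Finite) (n : ℕ) :
    {g : G | wordLength X g ≤ n}.Finite := by
  induction n with
  | zero =>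
    refine Set.Finite.subset (Set.finite_singleton 1) fun g hg => ?_
    simp only [Set.mem_setOf_eq, Nat.le_zero] at hg
    simp [wl_eq_zero hX hg]
  | succ n ih =>
    have hA : (X ∪ X⁻¹ : Set G).Finite := hXf.union hXf.inv
    refine Set.Finite.subset (ih.union (Set.Finite.image2 (· * ·) hA ih)) fun g hg => ?_
    simp only [Set.mem_setOf_eq] at hg
    obtain ⟨l, hlen, hc, hp⟩ := wl_exists hX g
    match l, hlen, hc, hp with
    | [], hlen, hc, hp => exact Or.inl (by simp only [Set.mem_setOf_eq]; rw [← hp]; simp [wl_one])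
    | a :: t, hlen, hc, hp =>
      refine Or.inr (Set.mem_image2.mpr ⟨a, ?_, t.prod, ?_, by rw [← hp]; simp⟩)
      · rcases hc a (by simp) with h' | h'
        · exact Or.inl h'
        · exact Or.inr (Set.mem_inv.mpr h')
      · have ht : wordLength X t.prod ≤ t.length := wl_le (fun x hx => hc x (by simp [hx])) rfl
        have : t.length ≤ n := by
          simp only [List.length_cons] at hlen; omega
        exact Set.mem_setOf_eq ▸ le_trans ht this

end WL

/-- The set of conjugates of elements of `Y` by elements of length at most `m`. -/
def conjSet {G : Type*} [Group G] (X : Set G) (Y : Finset G) (m : ℕ) : Set G :=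
  {g | ∃ w y, wordLength X w ≤ m ∧ y ∈ Y ∧ g = w * y * w⁻¹}

section CS
variable {G : Type*} [Group G] (X : Finset G)

lemma conjSet_mono (Y : Finset G) {m m' : ℕ} (h : m ≤ m') :
    conjSet (X : Set G) Y m ⊆ conjSet (X : Set G) Y m' := by
  rintro g ⟨w, y, hw, hy, rfl⟩
  exact ⟨w, y, le_trans hw h, hy, rfl⟩

lemma conjSet_sub_Y (Y : Finset G) (m : ℕ) : (Y : Set G) ⊆ conjSet (X : Set G) Y m :=
  fun y hy => ⟨1, y, by simp [wl_one], hy, by simp⟩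

lemma conjSet_len (hX : Subgroup.closure (X : Set G) = ⊤) (Y : Finset G) (m : ℕ) {g : G}
    (hg : g ∈ conjSet (X : Set G) Y m) :
    wordLength (X : Set G) g ≤ 2 * m + Y.sup (wordLength (X : Set G)) := by
  obtain ⟨w, y, hw, hy, rfl⟩ := hg
  have h1 := wl_mul hX (w * y) w⁻¹
  have h2 := wl_mul hX w y
  have h3 := wl_inv hX w
  have h4 : wordLength (X : Set G) y ≤ Y.sup (wordLength (X : Set G)) := Finset.le_sup hy
  omega

lemma conjSet_sub_nc (Y : Finset G) (m : ℕ) :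
    conjSet (X : Set G) Y m ⊆ (Subgroup.normalClosure (Y : Set G) : Set G) := by
  rintro g ⟨w, y, hw, hy, rfl⟩
  exact Subgroup.normalClosure_normal.conj_mem y (Subgroup.subset_normalClosure hy) w

end CS

/-- product of a selection of elements. -/
def bprod {G : Type*} [Group G] (h : ℕ → G) (ε : ℕ → Bool) : ℕ → G
  | 0 => 1
  | (m + 1) => bprod h ε m * (if ε m then h m else 1)

lemma count_lemma {G : Type*} [Group G] (X : Finset G)
    (hX : Subgroup.closure (X : Set G) = ⊤) (Y : Finset G) (M : ℕ)
    (hstrict : ∀ m < M, Subgroup.closure (conjSet (X : Set G) Y m) ≠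
      Subgroup.closure (conjSet (X : Set G) Y (m + 1)))
    (n : ℕ) (hn : M * (2 * M + Y.sup (wordLength (X : Set G))) ≤ n) :
    2 ^ M ≤ growth (X : Set G) n := by
  set L := Y.sup (wordLength (X : Set G)) with hL
  set H : ℕ → Subgroup G := fun m => Subgroup.closure (conjSet (X : Set G) Y m) with hH
  have hHmono : ∀ {m m' : ℕ}, m ≤ m' → H m ≤ H m' :=
    fun h => Subgroup.closure_mono (conjSet_mono X Y h)
  -- pick generators
  have hpick : ∀ m : ℕ, ∃ s : G, m < M → s ∈ conjSet (X : Set G) Y (m + 1) ∧ s ∉ H m := by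
    intro m
    by_cases hm : m < M
    · have hex : ∃ s, s ∈ conjSet (X : Set G) Y (m + 1) ∧ s ∉ H m := by
        by_contra hall
        push_neg at hall
        refine hstrict m hm (le_antisymm (hHmono (Nat.le_succ m)) ?_)
        exact (Subgroup.closure_le _).mpr fun s hs => hall s hs
      exact ⟨hex.choose, fun _ => hex.choose_spec⟩
    · exact ⟨1, fun h => absurd h hm⟩
  choose hfun hspec using hpick
  -- properties of bprod
  have hmemH : ∀ (ε : ℕ → Bool) (m : ℕ), m ≤ M → bprod hfun ε m ∈ H m := by
    intro ε m
    induction m with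
    | zero => intro _; exact Subgroup.one_mem _
    | succ m ih =>
      intro hm
      refine Subgroup.mul_mem _ (hHmono (Nat.le_succ m) (ih (by omega))) ?_
      by_cases hε : ε m
      · simp only [hε, if_true]
        exact Subgroup.subset_closure ((hspec m (by omega)).1)
      · simp only [hε, if_false]
        exact Subgroup.one_mem _
  have hinj : ∀ (m : ℕ), m ≤ M → ∀ ε ε' : ℕ → Bool,
      bprod hfun ε m = bprod hfun ε' m → ∀ i < m, ε i = ε' i := by
    intro m
    induction m with
    | zero => intro _ _ _ _ i hi; omega
    | succ m ih =>
      intro hm ε ε' heq i hi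
      have hmM : m < M := by omega
      have hE : bprod hfun ε (m+1) = bprod hfun ε m * (if ε m then hfun m else 1) := rfl
      have hE' : bprod hfun ε' (m+1) = bprod hfun ε' m * (if ε' m then hfun m else 1) := rfl
      by_cases hεm : ε m = ε' m
      · have heq' : bprod hfun ε m = bprod hfun ε' m := by
          rw [hE, hE', hεm] at heq
          exact mul_right_cancel heq
        rcases Nat.lt_succ_iff_lt_or_eq.mp hi with hi' | rfl
        · exact ih (by omega) ε ε' heq' i hi'
        · exact hεm
      · exfalso
        have hboth : bprod hfun ε m ∈ H m ∧ bprod hfun ε' m ∈ H m :=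
          ⟨hmemH ε m (by omega), hmemH ε' m (by omega)⟩
        cases hb : ε m <;> cases hb' : ε' m
        · exact hεm (by rw [hb, hb'])
        · -- ε m = false, ε' m = true
          rw [hE, hE', hb, hb'] at heq
          have heq2 : bprod hfun ε m = bprod hfun ε' m * hfun m := by simpa using heq
          refine (hspec m hmM).2 ?_
          have : hfun m = (bprod hfun ε' m)⁻¹ * bprod hfun ε m := by
            rw [heq2]; group
          rw [this]
          exact Subgroup.mul_mem _ (Subgroup.inv_mem _ hboth.2) hboth.1
        · rw [hE, hE', hb, hb'] at heq
          have heq2 : bprod hfun ε m * hfun m = bprod hfun ε' m := by simpa using heq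
          refine (hspec m hmM).2 ?_
          have : hfun m = (bprod hfun ε m)⁻¹ * bprod hfun ε' m := by
            rw [← heq2]; group
          rw [this]
          exact Subgroup.mul_mem _ (Subgroup.inv_mem _ hboth.1) hboth.2
        · exact hεm (by rw [hb, hb'])
  have hlen : ∀ (ε : ℕ → Bool) (m : ℕ), m ≤ M →
      wordLength (X : Set G) (bprod hfun ε m) ≤ m * (2 * M + L) := by
    intro ε m
    induction m with
    | zero =>
      intro _
      have : bprod hfun ε 0 = 1 := rfl
      simp [this, wl_one]
    | succ m ih =>
      intro hm
      have hE : bprod hfun ε (m+1) = bprod hfun ε m * (if ε m then hfun m else 1) := rfl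
      have h1 := wl_mul hX (bprod hfun ε m) (if ε m then hfun m else 1)
      have h2 : wordLength (X : Set G) (if ε m then hfun m else 1) ≤ 2 * M + L := by
        by_cases hε : ε m
        · rw [if_pos hε]
          have := conjSet_len X hX Y (m+1) ((hspec m (by omega)).1)
          rw [← hL] at this
          omega
        · rw [if_neg hε, wl_one]; omega
      have := ih (by omega)
      rw [hE]
      calc wordLength (X : Set G) (bprod hfun ε m * (if ε m then hfun m else 1))
          ≤ wordLength (X : Set G) (bprod hfun ε m)
            + wordLength (X : Set G) (if ε m then hfun m else 1) := h1
        _ ≤ m * (2 * M + L) + (2 * M + L) := by omega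
        _ = (m + 1) * (2 * M + L) := by ring
  -- injection into the ball of radius n
  have hball := wl_ball_finite hX X.finite_toSet n
  classical
  let B : Finset G := hball.toFinset
  let F : (Fin M → Bool) → G := fun v =>
    bprod hfun (fun i => if h : i < M then v ⟨i, h⟩ else false) M
  have hmaps : ∀ v : Fin M → Bool, F v ∈ B := by
    intro v
    have := hlen (fun i => if h : i < M then v ⟨i, h⟩ else false) M le_rfl
    simp only [B, F, Set.Finite.mem_toFinset, Set.mem_setOf_eq]
    omega
  have hFinj : Function.Injective F := by
    intro v v' heq
    funext i
    have := hinj M le_rfl _ _ heq i.1 i.2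
    simpa [i.2] using this
  have hcard : (2 : ℕ) ^ M ≤ B.card := by
    have h1 : (Finset.univ : Finset (Fin M → Bool)).card ≤ B.card :=
      Finset.card_le_card_of_injOn F (fun v _ => hmaps v) (Function.Injective.injOn hFinj)
    simpa [Finset.card_univ, Fintype.card_fun] using h1
  have hgrowth_eq : growth (X : Set G) n = B.card := Set.ncard_eq_toFinset_card _ hball
  rw [growth, Set.ncard_eq_toFinset_card _ hball]
  exact hcard


lemma sqrt3le2 : (3:ℝ) ^ ((1:ℝ)/2) ≤ 2 := by
  rw [← Real.sqrt_eq_rpow]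
  rw [show (2:ℝ) = Real.sqrt 4 by
    rw [show (4:ℝ) = 2^2 by norm_num, Real.sqrt_sq (by norm_num)]]
  exact Real.sqrt_le_sqrt (by norm_num)

lemma numeric (θ C : ℝ) (hθ : θ < 1/2) (hC : 1 ≤ C) (L M : ℕ) (hL : 1 ≤ L)
    (h : ∀ n : ℕ, M*(2*M+L) ≤ n → 0 < n → (M:ℝ) * Real.log 2 ≤ C * (n:ℝ)^θ) :
    (M:ℝ) ≤ (5*C)^((1:ℝ)/(1-2*θ)) * (L:ℝ)^(θ/(1-θ)) := by
  have log2 := Real.log_two_gt_d9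
  have hCpos : (0:ℝ) < C := by linarith
  rcases Nat.eq_zero_or_pos M with rfl | hM
  · simp only [Nat.cast_zero]
    exact mul_nonneg (Real.rpow_nonneg (by linarith) _) (Real.rpow_nonneg (Nat.cast_nonneg L) _)
  have hMR : (1:ℝ) ≤ (M:ℝ) := by exact_mod_cast hM
  have hLR : (1:ℝ) ≤ (L:ℝ) := by exact_mod_cast hL
  have hMpos : (0:ℝ) < (M:ℝ) := by linarith
  have ha : (0:ℝ) < 1 - 2*θ := by linarith
  have hb : (0:ℝ) < 1 - θ := by linarith
  have h5C : (1:ℝ) ≤ 5*C := by linarith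
  rcases lt_trichotomy θ 0 with hneg | rfl | hpos
  · -- θ < 0 : contradiction
    exfalso
    set n : ℕ := max (M*(2*M+L)) (max 1 ⌈(3*C)^((1:ℝ)/(-θ))⌉₊) with hn
    have hn1 : 0 < n := lt_of_lt_of_le one_pos (le_max_of_le_right (le_max_left _ _))
    have hnR : M*(2*M+L) ≤ n := le_max_left _ _
    have hnc : ((3*C)^((1:ℝ)/(-θ)) : ℝ) ≤ (n:ℝ) := by
      calc ((3*C)^((1:ℝ)/(-θ)) : ℝ) ≤ (⌈(3*C)^((1:ℝ)/(-θ))⌉₊ : ℝ) := Nat.le_ceil _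
        _ ≤ (n:ℝ) := by
            exact_mod_cast Nat.cast_le.mpr (le_max_of_le_right (le_max_right _ _))
    have hnegθ : (0:ℝ) < -θ := by linarith
    have h3C : (3*C : ℝ) ≤ (n:ℝ)^(-θ) := by
      calc (3*C : ℝ) = ((3*C)^((1:ℝ)/(-θ)))^(-θ) := by
            rw [← Real.rpow_mul (by positivity), one_div_mul_cancel (ne_of_gt hnegθ),
              Real.rpow_one]
        _ ≤ (n:ℝ)^(-θ) := Real.rpow_le_rpow (by positivity) hnc (le_of_lt hnegθ)
    have hcn : C * (n:ℝ)^θ ≤ 1/3 := by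
      have hnθ : (n:ℝ)^θ = ((n:ℝ)^(-θ))⁻¹ := by
        rw [← Real.rpow_neg (by positivity), neg_neg]
      rw [hnθ]
      have hpos3C : (0:ℝ) < 3*C := by linarith
      have hinv : ((n:ℝ)^(-θ))⁻¹ ≤ (3*C)⁻¹ := inv_anti₀ hpos3C h3C
      have : C * ((n:ℝ)^(-θ))⁻¹ ≤ C * (3*C)⁻¹ :=
        mul_le_mul_of_nonneg_left hinv (le_of_lt hCpos)
      have heq : C * (3*C)⁻¹ = 1/3 := by field_simp
      linarith [heq ▸ this]

    have := h n hnR hn1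
    nlinarith [this, hcn]
  · -- θ = 0
    have h0 := h (M*(2*M+L)) le_rfl (by positivity)
    rw [Real.rpow_zero, mul_one] at h0
    rw [show ((1:ℝ)/(1-2*0)) = 1 by norm_num, show ((0:ℝ)/(1-0)) = 0 by norm_num,
      Real.rpow_one, Real.rpow_zero, mul_one]
    nlinarith
  · -- 0 < θ
    have h0 := h (M*(2*M+L)) le_rfl (by positivity)
    have h3θ : (3:ℝ)^θ ≤ 2 :=
      le_trans (Real.rpow_le_rpow_of_exponent_le (by norm_num) (le_of_lt hθ)) sqrt3le2
    have hLe : (1:ℝ) ≤ (L:ℝ)^(θ/(1-θ)) := by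
      calc (1:ℝ) = (1:ℝ)^(θ/(1-θ)) := (Real.one_rpow _).symm
        _ ≤ (L:ℝ)^(θ/(1-θ)) := Real.rpow_le_rpow (by norm_num) hLR (le_of_lt (div_pos hpos hb))
    rcases le_or_gt (L:ℝ) (M:ℝ) with hLM | hML
    · -- L ≤ M : R ≤ 3 M^2
      have hR : ((M*(2*M+L) : ℕ) : ℝ) ≤ 3*(M:ℝ)^2 := by
        push_cast; nlinarith
      have h1 : ((M*(2*M+L) : ℕ) : ℝ)^θ ≤ 2 * (M:ℝ)^(2*θ) := by
        calc ((M*(2*M+L) : ℕ) : ℝ)^θ ≤ (3*(M:ℝ)^2)^θ :=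
              Real.rpow_le_rpow (by positivity) hR (le_of_lt hpos)
          _ = 3^θ * ((M:ℝ)^2)^θ := Real.mul_rpow (by norm_num) (by positivity)
          _ ≤ 2 * ((M:ℝ)^2)^θ := by
              exact mul_le_mul_of_nonneg_right h3θ (by positivity)
          _ = 2 * (M:ℝ)^(2*θ) := by
              rw [← Real.rpow_natCast (M:ℝ) 2, ← Real.rpow_mul (by positivity)]
              norm_num [mul_comm]
      have h2 : (M:ℝ) * Real.log 2 ≤ 2*C * (M:ℝ)^(2*θ) := by
        calc (M:ℝ) * Real.log 2 ≤ C * ((M*(2*M+L) : ℕ) : ℝ)^θ := h0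
          _ ≤ C * (2 * (M:ℝ)^(2*θ)) := mul_le_mul_of_nonneg_left h1 (le_of_lt hCpos)
          _ = 2*C * (M:ℝ)^(2*θ) := by ring
      -- multiply by M^(-2θ)
      have hMθpos : (0:ℝ) < (M:ℝ)^(2*θ) := Real.rpow_pos_of_pos hMpos _
      have h3 : (M:ℝ)^(1-2*θ) * Real.log 2 ≤ 2*C := by
        have := mul_le_mul_of_nonneg_right h2 (le_of_lt (inv_pos.mpr hMθpos))
        calc (M:ℝ)^(1-2*θ) * Real.log 2
            = (M:ℝ) * Real.log 2 * ((M:ℝ)^(2*θ))⁻¹ := by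
              rw [show (1-2*θ) = 1 + (-(2*θ)) by ring, Real.rpow_add hMpos,
                Real.rpow_one, Real.rpow_neg (le_of_lt hMpos)]
              ring
          _ ≤ 2*C * (M:ℝ)^(2*θ) * ((M:ℝ)^(2*θ))⁻¹ := this
          _ = 2*C := by field_simp
      have h4 : (M:ℝ)^(1-2*θ) ≤ 5*C := by nlinarith [Real.rpow_nonneg (le_of_lt hMpos) (1-2*θ)]
      have h5 : (M:ℝ) ≤ (5*C)^((1:ℝ)/(1-2*θ)) := by
        calc (M:ℝ) = ((M:ℝ)^(1-2*θ))^((1:ℝ)/(1-2*θ)) := by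
              rw [← Real.rpow_mul (le_of_lt hMpos), mul_one_div, div_self (ne_of_gt ha),
                Real.rpow_one]
          _ ≤ (5*C)^((1:ℝ)/(1-2*θ)) :=
              Real.rpow_le_rpow (Real.rpow_nonneg (le_of_lt hMpos) _) h4
                (le_of_lt (div_pos one_pos ha))
      calc (M:ℝ) ≤ (5*C)^((1:ℝ)/(1-2*θ)) := h5
        _ = (5*C)^((1:ℝ)/(1-2*θ)) * 1 := by ring
        _ ≤ (5*C)^((1:ℝ)/(1-2*θ)) * (L:ℝ)^(θ/(1-θ)) := by
            exact mul_le_mul_of_nonneg_left hLe (Real.rpow_nonneg (by linarith) _)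
    · -- M < L : R ≤ 3 M L
      have hR : ((M*(2*M+L) : ℕ) : ℝ) ≤ 3*((M:ℝ)*(L:ℝ)) := by
        push_cast; nlinarith
      have h1 : ((M*(2*M+L) : ℕ) : ℝ)^θ ≤ 2 * ((M:ℝ)^θ * (L:ℝ)^θ) := by
        calc ((M*(2*M+L) : ℕ) : ℝ)^θ ≤ (3*((M:ℝ)*(L:ℝ)))^θ :=
              Real.rpow_le_rpow (by positivity) hR (le_of_lt hpos)
          _ = 3^θ * ((M:ℝ)*(L:ℝ))^θ := Real.mul_rpow (by norm_num) (by positivity)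
          _ ≤ 2 * ((M:ℝ)*(L:ℝ))^θ := mul_le_mul_of_nonneg_right h3θ (by positivity)
          _ = 2 * ((M:ℝ)^θ * (L:ℝ)^θ) := by
              rw [Real.mul_rpow (le_of_lt hMpos) (by positivity)]
      have h2 : (M:ℝ) * Real.log 2 ≤ 2*C*(L:ℝ)^θ * (M:ℝ)^θ := by
        calc (M:ℝ) * Real.log 2 ≤ C * ((M*(2*M+L) : ℕ) : ℝ)^θ := h0
          _ ≤ C * (2 * ((M:ℝ)^θ * (L:ℝ)^θ)) := mul_le_mul_of_nonneg_left h1 (le_of_lt hCpos)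
          _ = 2*C*(L:ℝ)^θ * (M:ℝ)^θ := by ring
      have hMθpos : (0:ℝ) < (M:ℝ)^θ := Real.rpow_pos_of_pos hMpos _
      have h3 : (M:ℝ)^(1-θ) * Real.log 2 ≤ 2*C*(L:ℝ)^θ := by
        have := mul_le_mul_of_nonneg_right h2 (le_of_lt (inv_pos.mpr hMθpos))
        calc (M:ℝ)^(1-θ) * Real.log 2
            = (M:ℝ) * Real.log 2 * ((M:ℝ)^θ)⁻¹ := by
              rw [show (1-θ) = 1 + (-θ) by ring, Real.rpow_add hMpos,
                Real.rpow_one, Real.rpow_neg (le_of_lt hMpos)]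
              ring
          _ ≤ 2*C*(L:ℝ)^θ * (M:ℝ)^θ * ((M:ℝ)^θ)⁻¹ := this
          _ = 2*C*(L:ℝ)^θ := by field_simp
      have hLθpos : (0:ℝ) < (L:ℝ)^θ := Real.rpow_pos_of_pos (by linarith) _
      have h4 : (M:ℝ)^(1-θ) ≤ 5*C*(L:ℝ)^θ := by
        nlinarith [Real.rpow_nonneg (le_of_lt hMpos) (1-θ)]
      have h5 : (M:ℝ) ≤ (5*C)^((1:ℝ)/(1-θ)) * (L:ℝ)^(θ/(1-θ)) := by
        calc (M:ℝ) = ((M:ℝ)^(1-θ))^((1:ℝ)/(1-θ)) := by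
              rw [← Real.rpow_mul (le_of_lt hMpos), mul_one_div, div_self (ne_of_gt hb),
                Real.rpow_one]
          _ ≤ (5*C*(L:ℝ)^θ)^((1:ℝ)/(1-θ)) :=
              Real.rpow_le_rpow (Real.rpow_nonneg (le_of_lt hMpos) _) h4
                (le_of_lt (div_pos one_pos hb))
          _ = (5*C)^((1:ℝ)/(1-θ)) * ((L:ℝ)^θ)^((1:ℝ)/(1-θ)) :=
              Real.mul_rpow (by linarith) (Real.rpow_nonneg (Nat.cast_nonneg L) _)
          _ = (5*C)^((1:ℝ)/(1-θ)) * (L:ℝ)^(θ/(1-θ)) := by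
              rw [← Real.rpow_mul (by positivity), mul_one_div]
      calc (M:ℝ) ≤ (5*C)^((1:ℝ)/(1-θ)) * (L:ℝ)^(θ/(1-θ)) := h5
        _ ≤ (5*C)^((1:ℝ)/(1-2*θ)) * (L:ℝ)^(θ/(1-θ)) := by
            refine mul_le_mul_of_nonneg_right ?_ (by positivity)
            refine Real.rpow_le_rpow_of_exponent_le h5C ?_
            rw [div_le_div_iff₀ hb ha]
            nlinarith

/-- Generalized Milnor lemma, quantitative version. -/
theorem quantitative_generalized_milnor_lemma {G : Type*} [Group G] (X : Finset G)
    (hX : Subgroup.closure (X : Set G) = ⊤)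
    (θ C : ℝ) (hθ : θ < 1 / 2) (hC : 1 ≤ C)
    (C₁ : ℝ) (hC₁ : C₁ = 2 * (5 * C) ^ ((1 : ℝ) / (1 - 2 * θ)))
    (hgrowth : ∀ n : ℕ, 0 < n → (growth (X : Set G) n : ℝ) ≤ Real.exp (C * (n : ℝ) ^ θ))
    (Y : Finset G) (hY : Y.Nonempty) :
    ∃ Z : Finset G,
      Subgroup.closure (Z : Set G) = Subgroup.normalClosure (Y : Set G) ∧
      ((Z.sup (wordLength (X : Set G)) : ℕ) : ℝ) ≤
        ((Y.sup (wordLength (X : Set G)) : ℕ) : ℝ) +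
          C₁ * ((Y.sup (wordLength (X : Set G)) : ℕ) : ℝ) ^ (θ / (1 - θ)) := by
  classical
  have hC₁nn : 0 ≤ C₁ := by
    rw [hC₁]
    exact mul_nonneg (by norm_num) (Real.rpow_nonneg (by linarith) _)
  by_cases hL0 : Y.sup (wordLength (X : Set G)) = 0
  · refine ⟨Y, ?_, ?_⟩
    · have hY1 : (Y : Set G) ⊆ {1} := by
        intro y hy
        have h0 : wordLength (X : Set G) y = 0 :=
          Nat.le_zero.mp (hL0 ▸ Finset.le_sup (Finset.mem_coe.mp hy))
        simp [wl_eq_zero hX h0]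
      have h1 : Subgroup.closure (Y : Set G) = ⊥ := by
        apply le_antisymm _ bot_le
        calc Subgroup.closure (Y : Set G) ≤ Subgroup.closure {1} :=
              Subgroup.closure_mono hY1
          _ = ⊥ := Subgroup.closure_singleton_one
      have h2 : Subgroup.normalClosure (Y : Set G) = ⊥ := by
        apply le_antisymm _ bot_le
        apply Subgroup.normalClosure_le_normal
        intro y hy
        have := hY1 hy
        simp only [Set.mem_singleton_iff] at this
        simp [this]
      rw [h1, h2]
    · have hnn : 0 ≤ C₁ * ((Y.sup (wordLength (X : Set G)) : ℕ) : ℝ) ^ (θ / (1 - θ)) :=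
        mul_nonneg hC₁nn (Real.rpow_nonneg (Nat.cast_nonneg _) _)
      linarith
  · have hL1 : 1 ≤ Y.sup (wordLength (X : Set G)) := Nat.one_le_iff_ne_zero.mpr hL0
    set L := Y.sup (wordLength (X : Set G)) with hLdef
    set H : ℕ → Subgroup G := fun m => Subgroup.closure (conjSet (X : Set G) Y m) with hH
    have hcount : ∀ M : ℕ, (∀ m < M, H m ≠ H (m+1)) →
        (M : ℝ) ≤ (5*C)^((1:ℝ)/(1-2*θ)) * (L : ℝ)^(θ/(1-θ)) := by
      intro M hstrict
      apply numeric θ C hθ hC L M hL1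
      intro n hn hnpos
      have h2M : 2 ^ M ≤ growth (X : Set G) n :=
        count_lemma X hX Y M (fun m hm => hstrict m hm) n hn
      have hg := hgrowth n hnpos
      have hcast : ((2:ℝ))^M ≤ Real.exp (C * (n:ℝ)^θ) := by
        calc ((2:ℝ))^M = ((2^M : ℕ) : ℝ) := by push_cast; ring
          _ ≤ (growth (X : Set G) n : ℝ) := by exact_mod_cast h2M
          _ ≤ Real.exp (C * (n:ℝ)^θ) := hg
      have hlog := Real.log_le_log (by positivity) hcast
      rwa [Real.log_pow, Real.log_exp] at hlog
    have hne : {m | H m = H (m+1)}.Nonempty := by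
      by_contra hcon
      have hall : ∀ m, H m ≠ H (m+1) := fun m hm => hcon ⟨m, hm⟩
      obtain ⟨M', hM'⟩ := exists_nat_gt ((5*C)^((1:ℝ)/(1-2*θ)) * (L : ℝ)^(θ/(1-θ)))
      exact absurd (hcount M' fun m _ => hall m) (not_le.mpr hM')
    set M := sInf {m | H m = H (m+1)} with hM
    have hMstab : H M = H (M+1) := Nat.sInf_mem hne
    have hMle : (M : ℝ) ≤ (5*C)^((1:ℝ)/(1-2*θ)) * (L : ℝ)^(θ/(1-θ)) :=
      hcount M (fun m hm => Nat.notMem_of_lt_sInf hm)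
    have conj_le : ∀ w : G, wordLength (X : Set G) w ≤ 1 →
        ∀ h ∈ H M, w * h * w⁻¹ ∈ H M := by
      intro w hw h hh
      have hsub : ∀ s ∈ conjSet (X : Set G) Y M, w * s * w⁻¹ ∈ H M := by
        rintro s ⟨u, y, hu, hy, rfl⟩
        have he : w * (u * y * u⁻¹) * w⁻¹ = (w * u) * y * (w * u)⁻¹ := by group
        rw [he, hMstab]
        refine Subgroup.subset_closure ⟨w * u, y, ?_, hy, rfl⟩
        have := wl_mul hX w u
        omega
      have hle : H M ≤ (H M).comap (MulAut.conj w).toMonoidHom := by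
        show Subgroup.closure (conjSet (X : Set G) Y M) ≤ _
        refine (Subgroup.closure_le _).mpr ?_
        intro s hs
        simp only [SetLike.mem_coe, Subgroup.mem_comap, MulEquiv.coe_toMonoidHom,
          MulAut.conj_apply]
        exact hsub s hs
      have := hle hh
      simpa [Subgroup.mem_comap, MulAut.conj_apply] using this
    have hnormal : (H M).Normal := by
      constructor
      intro h hh g
      have hg : g ∈ Subgroup.closure (X : Set G) := by rw [hX]; trivial
      have main : (∀ h' ∈ H M, g * h' * g⁻¹ ∈ H M) ∧ (∀ h' ∈ H M, g⁻¹ * h' * g ∈ H M) := by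
        refine Subgroup.closure_induction
          (p := fun g _ => (∀ h' ∈ H M, g * h' * g⁻¹ ∈ H M) ∧
            (∀ h' ∈ H M, g⁻¹ * h' * g ∈ H M)) ?_ ?_ ?_ ?_ hg
        · intro x hx
          refine ⟨conj_le x (wl_mem hx), fun h' hh' => ?_⟩
          have := conj_le x⁻¹ (wl_mem_inv hx) h' hh'
          simpa using this
        · exact ⟨fun h' hh' => by simpa using hh', fun h' hh' => by simpa using hh'⟩
        · rintro x y _ _ ⟨hx1, hx2⟩ ⟨hy1, hy2⟩
          constructor
          · intro h' hh'
            have hrw : (x*y) * h' * (x*y)⁻¹ = x * (y * h' * y⁻¹) * x⁻¹ := by group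
            rw [hrw]; exact hx1 _ (hy1 h' hh')
          · intro h' hh'
            have hrw : (x*y)⁻¹ * h' * (x*y) = y⁻¹ * (x⁻¹ * h' * x) * y := by group
            rw [hrw]; exact hy2 _ (hx2 h' hh')
        · rintro x _ ⟨hx1, hx2⟩
          exact ⟨fun h' hh' => by simpa using hx2 h' hh',
            fun h' hh' => by simpa using hx1 h' hh'⟩
      exact main.1 h hh
    haveI := hnormal
    have hHM_eq : H M = Subgroup.normalClosure (Y : Set G) := by
      apply le_antisymm
      · exact (Subgroup.closure_le _).mpr (conjSet_sub_nc X Y M)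
      · exact Subgroup.normalClosure_le_normal
          (fun y hy => Subgroup.subset_closure (conjSet_sub_Y X Y M hy))
    have hball := wl_ball_finite hX X.finite_toSet M
    let Bf : Finset G := hball.toFinset
    let Z : Finset G := Finset.image (fun p : G × G => p.1 * p.2 * p.1⁻¹) (Bf ×ˢ Y)
    have hZS : (Z : Set G) = conjSet (X : Set G) Y M := by
      ext g
      simp only [Z, Bf, Finset.coe_image, Set.mem_image, Finset.mem_coe, Finset.mem_product,
        Set.Finite.mem_toFinset, Set.mem_setOf_eq, conjSet]
      constructor
      · rintro ⟨⟨w, y⟩, ⟨hw, hy⟩, rfl⟩; exact ⟨w, y, hw, hy, rfl⟩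
      · rintro ⟨w, y, hw, hy, rfl⟩; exact ⟨⟨w, y⟩, ⟨hw, hy⟩, rfl⟩
    refine ⟨Z, ?_, ?_⟩
    · rw [hZS]; exact hHM_eq
    · have hsup : Z.sup (wordLength (X : Set G)) ≤ 2 * M + L := by
        refine Finset.sup_le fun z hz => ?_
        have hzS : z ∈ conjSet (X : Set G) Y M := by
          rw [← hZS]; exact Finset.mem_coe.mpr hz
        have := conjSet_len X hX Y M hzS
        omega
      have hcast : ((Z.sup (wordLength (X : Set G)) : ℕ) : ℝ) ≤ 2 * (M:ℝ) + (L:ℝ) := by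
        exact_mod_cast Nat.cast_le.mpr hsup |>.trans (by push_cast; linarith)
      have h2M : 2 * (M:ℝ) ≤ C₁ * (L:ℝ)^(θ/(1-θ)) := by
        rw [hC₁]; nlinarith [hMle]
      calc ((Z.sup (wordLength (X : Set G)) : ℕ) : ℝ) ≤ 2 * (M:ℝ) + (L:ℝ) := hcast
        _ ≤ (L:ℝ) + C₁ * (L:ℝ)^(θ/(1-θ)) := by linarith
end

section
/- For all real numbers θ < 1/2 and C ≥ 1 there is a constant C₂ > 0 with the following property: whenever G is a group generated by a finite set X such that γ_X(n) ≤ exp(C·n^θ) for all n > 0, then for every k ≥ 0 the k-th derived subgroup G^(k) is generated by some finite set X_k with ℓ_X(X_k) ≤ C₂·4^k. -/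
universe u

namespace DSG

variable {G : Type u} [Group G]

/-- A list is `Ok` if all entries are in `X ∪ X⁻¹`. -/
def Ok (X : Set G) (l : List G) : Prop := ∀ x ∈ l, x ∈ X ∨ x⁻¹ ∈ X

theorem wl_le {X : Set G} {g : G} {l : List G} (hl : Ok X l) (hp : l.prod = g) :
    wordLength X g ≤ l.length :=
  Nat.sInf_le ⟨l, rfl, hl, hp⟩

theorem wl_one {X : Set G} : wordLength X (1 : G) = 0 :=
  Nat.le_zero.mp (wl_le (l := []) (fun x hx => absurd hx List.not_mem_nil) List.prod_nil)

theorem exists_ok_list {X : Set G} (hX : Subgroup.closure X = ⊤) (g : G) :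
    ∃ l : List G, Ok X l ∧ l.prod = g := by
  have hg : g ∈ Submonoid.closure (X ∪ X⁻¹) := by
    rw [← Subgroup.closure_toSubmonoid, hX]; trivial
  obtain ⟨l, hl, hp⟩ := Submonoid.exists_list_of_mem_closure hg
  refine ⟨l, fun x hx => ?_, hp⟩
  rcases hl x hx with h | h
  · exact Or.inl h
  · exact Or.inr (Set.mem_inv.mp h)

theorem exists_word {X : Set G} (hX : Subgroup.closure X = ⊤) (g : G) :
    ∃ l : List G, Ok X l ∧ l.prod = g ∧ l.length = wordLength X g := by
  have hne : {n : ℕ | ∃ l : List G, l.length = n ∧ Ok X l ∧ l.prod = g}.Nonempty := by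
    obtain ⟨l, h1, h2⟩ := exists_ok_list hX g
    exact ⟨l.length, l, rfl, h1, h2⟩
  obtain ⟨l, h1, h2, h3⟩ := Nat.sInf_mem hne
  exact ⟨l, h2, h3, h1⟩

theorem wl_mul {X : Set G} (hX : Subgroup.closure X = ⊤) (g h : G) :
    wordLength X (g * h) ≤ wordLength X g + wordLength X h := by
  obtain ⟨l, hl, hlp, hll⟩ := exists_word hX g
  obtain ⟨m, hm, hmp, hml⟩ := exists_word hX h
  have : Ok X (l ++ m) := by
    intro x hx
    rcases List.mem_append.mp hx with h' | h'
    · exact hl x h'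
    · exact hm x h'
  calc wordLength X (g * h) ≤ (l ++ m).length := wl_le this (by rw [List.prod_append, hlp, hmp])
  _ = wordLength X g + wordLength X h := by rw [List.length_append, hll, hml]

theorem wl_inv {X : Set G} (hX : Subgroup.closure X = ⊤) (g : G) :
    wordLength X g⁻¹ ≤ wordLength X g := by
  obtain ⟨l, hl, hlp, hll⟩ := exists_word hX g
  have hok : Ok X ((l.map fun x => x⁻¹).reverse) := by
    intro x hx
    rw [List.mem_reverse, List.mem_map] at hx
    obtain ⟨y, hy, rfl⟩ := hx
    rcases hl y hy with h | h
    · exact Or.inr (by simpa using h)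
    · exact Or.inl h
  calc wordLength X g⁻¹ ≤ ((l.map fun x => x⁻¹).reverse).length :=
        wl_le hok (by rw [← List.prod_inv_reverse, hlp])
  _ = wordLength X g := by simp [hll]

theorem wl_conj {X : Set G} (hX : Subgroup.closure X = ⊤) (u c : G) :
    wordLength X (u * c * u⁻¹) ≤ wordLength X c + 2 * wordLength X u := by
  calc wordLength X (u * c * u⁻¹) ≤ wordLength X (u * c) + wordLength X u⁻¹ :=
        wl_mul hX _ _
  _ ≤ wordLength X u + wordLength X c + wordLength X u := by
      have h1 := wl_mul hX u c
      have h2 := wl_inv hX u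
      omega
  _ = wordLength X c + 2 * wordLength X u := by ring

/-- Balls are finite when `X` is finite and generates. -/
theorem ball_finite {X : Set G} (hXfin : X.Finite) (hX : Subgroup.closure X = ⊤) (M : ℕ) :
    {g : G | wordLength X g ≤ M}.Finite := by
  induction M with
  | zero =>
    refine Set.Finite.subset (Set.finite_singleton 1) ?_
    intro g hg
    simp only [Set.mem_setOf_eq, Nat.le_zero] at hg
    obtain ⟨l, _, hlp, hll⟩ := exists_word hX g
    have : l = [] := List.length_eq_zero_iff.mp (by rw [hll, hg])
    simp only [Set.mem_singleton_iff]
    rw [← hlp, this, List.prod_nil]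
  | succ M ih =>
    have hV : (X ∪ X⁻¹).Finite := hXfin.union (Set.Finite.inv hXfin)
    refine Set.Finite.subset
      ((ih.union ((hV.biUnion (fun y _ => ih.image (fun g => y * g)))))) ?_
    intro g hg
    simp only [Set.mem_setOf_eq] at hg
    obtain ⟨l, hl, hlp, hll⟩ := exists_word hX g
    rcases Nat.lt_or_ge (wordLength X g) (M + 1) with h | h
    · exact Or.inl (Nat.lt_succ_iff.mp h)
    · have hlen : l.length = M + 1 := by omega
      match l, hlen with
      | y :: l', hlen =>
        have hyV : y ∈ X ∪ X⁻¹ := by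
          rcases hl y List.mem_cons_self with h' | h'
          · exact Or.inl h'
          · exact Or.inr (Set.mem_inv.mpr h')
        refine Or.inr (Set.mem_biUnion hyV ?_)
        refine ⟨l'.prod, ?_, by rw [← hlp]; simp⟩
        have hok : Ok X l' := fun x hx => hl x (List.mem_cons_of_mem y hx)
        have h2 := wl_le hok rfl
        have h3 : l'.length = M := by simpa using hlen
        simp only [Set.mem_setOf_eq]
        omega

end DSG

namespace DSG

variable {G : Type u} [Group G]

/-- Ordered product of `p j` over `j ∈ A ∩ [1,n]`, in increasing order of `j` left-to-right. -/
def D (p : ℕ → G) : ℕ → Finset ℕ → G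
  | 0, _ => 1
  | (n+1), A => D p n A * (if n+1 ∈ A then p (n+1) else 1)

theorem D_mem_closure (p : ℕ → G) (n : ℕ) (A : Finset ℕ) :
    D p n A ∈ Subgroup.closure {g : G | ∃ j, 1 ≤ j ∧ j ≤ n ∧ g = p j} := by
  induction n with
  | zero => exact one_mem _
  | succ n ih =>
    show D p n A * (if n+1 ∈ A then p (n+1) else 1) ∈ _
    refine mul_mem (Subgroup.closure_mono (fun g hg => ?_) ih) ?_
    · obtain ⟨j, h1, h2, h3⟩ := hg
      exact ⟨j, h1, Nat.le_succ_of_le h2, h3⟩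
    · by_cases h : n+1 ∈ A
      · rw [if_pos h]
        exact Subgroup.subset_closure ⟨n+1, by omega, le_refl _, rfl⟩
      · rw [if_neg h]; exact one_mem _

theorem D_agree (p : ℕ → G) {A B : Finset ℕ} {m : ℕ}
    (hAB : ∀ j, m < j → (j ∈ A ↔ j ∈ B)) (n : ℕ) (hn : m ≤ n) :
    ∃ E, D p n A = D p m A * E ∧ D p n B = D p m B * E := by
  induction n, hn using Nat.le_induction with
  | base => exact ⟨1, by simp, by simp⟩
  | succ n hmn ih =>
    obtain ⟨E, hA, hB⟩ := ih
    refine ⟨E * (if n+1 ∈ A then p (n+1) else 1), ?_, ?_⟩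
    · show D p n A * _ = _
      rw [hA, mul_assoc]
    · show D p n B * _ = _
      have : (if n+1 ∈ A then p (n+1) else 1) = (if n+1 ∈ B then p (n+1) else 1) := by
        by_cases h : n+1 ∈ A
        · rw [if_pos h, if_pos ((hAB (n+1) (by omega)).mp h)]
        · rw [if_neg h, if_neg (fun hb => h ((hAB (n+1) (by omega)).mpr hb))]
      rw [hB, mul_assoc, this]

theorem D_length {X : Set G} (hX : Subgroup.closure X = ⊤) (p : ℕ → G) (Λ : ℕ)
    (hp : ∀ j, 1 ≤ j → wordLength X (p j) ≤ 2*j + Λ) (n : ℕ) (A : Finset ℕ) :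
    wordLength X (D p n A) ≤ 2*n^2 + n*Λ := by
  induction n with
  | zero => simp [D, wl_one]
  | succ n ih =>
    show wordLength X (D p n A * (if n+1 ∈ A then p (n+1) else 1)) ≤ _
    have h1 := wl_mul hX (D p n A) (if n+1 ∈ A then p (n+1) else 1)
    have h2 : wordLength X (if n+1 ∈ A then p (n+1) else 1) ≤ 2*(n+1) + Λ := by
      by_cases h : n+1 ∈ A
      · rw [if_pos h]; exact hp (n+1) (by omega)
      · rw [if_neg h, wl_one]; omega
    nlinarith [ih, h1, h2]

theorem exists_relation {X : Set G} (hXfin : X.Finite) (hX : Subgroup.closure X = ⊤)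
    (p : ℕ → G) (N M : ℕ)
    (hM : ∀ A : Finset ℕ, A ⊆ Finset.Icc 1 N → wordLength X (D p N A) ≤ M)
    (hcount : growth X M < 2^N) :
    ∃ m, 1 ≤ m ∧ m ≤ N ∧
      p m ∈ Subgroup.closure {g : G | ∃ j, 1 ≤ j ∧ j ≤ m - 1 ∧ g = p j} := by
  classical
  have hfin := ball_finite hXfin hX M
  have hT : hfin.toFinset.card = growth X M := by
    rw [growth, Set.ncard_eq_toFinset_card _ hfin]
  have hcard : hfin.toFinset.card < ((Finset.Icc 1 N).powerset).card := by
    rw [Finset.card_powerset, Nat.card_Icc, hT]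
    simpa using hcount
  have hmap : ∀ A ∈ (Finset.Icc 1 N).powerset, D p N A ∈ hfin.toFinset := fun A hA => by
    rw [Set.Finite.mem_toFinset]
    exact hM A (Finset.mem_powerset.mp hA)
  obtain ⟨A, hA, B, hB, hne, hDeq⟩ :=
    Finset.exists_ne_map_eq_of_card_lt_of_maps_to hcard hmap
  rw [Finset.mem_powerset] at hA hB
  have main : ∀ A B : Finset ℕ, A ⊆ Finset.Icc 1 N → B ⊆ Finset.Icc 1 N →
      D p N A = D p N B → ∀ m, (∀ j, m < j → (j ∈ A ↔ j ∈ B)) → m ∈ A → m ∉ B →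
      1 ≤ m → m ≤ N →
      ∃ m', 1 ≤ m' ∧ m' ≤ N ∧
        p m' ∈ Subgroup.closure {g : G | ∃ j, 1 ≤ j ∧ j ≤ m' - 1 ∧ g = p j} := by
    intro A B hAsub hBsub hD m hagree hmA hmB h1m hmN
    obtain ⟨m', rfl⟩ : ∃ m', m = m' + 1 := ⟨m - 1, by omega⟩
    obtain ⟨E, hEA, hEB⟩ := D_agree p hagree N hmN
    have hDm : D p (m'+1) A = D p (m'+1) B := by
      have := hD
      rw [hEA, hEB] at this
      exact mul_right_cancel this
    have hA' : D p (m'+1) A = D p m' A * p (m'+1) := by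
      show D p m' A * _ = _
      rw [if_pos hmA]
    have hB' : D p (m'+1) B = D p m' B := by
      show D p m' B * _ = _
      rw [if_neg hmB, mul_one]
    have hpm : p (m'+1) = (D p m' A)⁻¹ * D p m' B := by
      rw [← hB', ← hDm, hA']
      group
    refine ⟨m'+1, by omega, hmN, ?_⟩
    rw [hpm]
    have hmem1 := D_mem_closure p m' A
    have hmem2 := D_mem_closure p m' B
    have hsimp : {g : G | ∃ j, 1 ≤ j ∧ j ≤ m' + 1 - 1 ∧ g = p j}
        = {g : G | ∃ j, 1 ≤ j ∧ j ≤ m' ∧ g = p j} := by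
      norm_num
    rw [hsimp]
    exact mul_mem (inv_mem hmem1) hmem2
  have hne' : (symmDiff A B).Nonempty := Finset.symmDiff_nonempty.mpr hne
  set m := (symmDiff A B).max' hne' with hm
  have hmmem : m ∈ symmDiff A B := Finset.max'_mem _ hne'
  have hagree : ∀ j, m < j → (j ∈ A ↔ j ∈ B) := by
    intro j hj
    by_contra hcon
    have : j ∈ symmDiff A B := by
      rw [Finset.mem_symmDiff]; tauto
    have := Finset.le_max' _ j this
    omega
  rcases Finset.mem_symmDiff.mp hmmem with ⟨h1, h2⟩ | ⟨h1, h2⟩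
  · have hIcc := hA h1
    rw [Finset.mem_Icc] at hIcc
    exact main A B hA hB hDeq m hagree h1 h2 hIcc.1 hIcc.2
  · have hIcc := hB h1
    rw [Finset.mem_Icc] at hIcc
    exact main B A hB hA hDeq.symm m (fun j hj => (hagree j hj).symm) h1 h2 hIcc.1 hIcc.2

end DSG

namespace DSG

theorem rpow_add_le {x y θ : ℝ} (hx : 0 ≤ x) (hy : 0 ≤ y) (h0 : 0 ≤ θ) (h1 : θ ≤ 1) :
    (x + y) ^ θ ≤ x ^ θ + y ^ θ := by
  lift x to NNReal using hx
  lift y to NNReal using hy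
  have := NNReal.rpow_add_le_add_rpow x y h0 h1
  rw [← NNReal.coe_add, ← NNReal.coe_rpow, ← NNReal.coe_rpow, ← NNReal.coe_rpow]
  exact_mod_cast this

/-- Pigeonhole window size. -/
noncomputable def NN (C θ : ℝ) (Λ : ℕ) : ℕ :=
  ⌈(8*C)^(1/(1-2*θ))⌉₊ + ⌈(4*C)^(1/(1-θ)) * (Λ:ℝ)^(θ/(1-θ))⌉₊ + 1

theorem NN_pos (C θ : ℝ) (Λ : ℕ) : 1 ≤ NN C θ Λ := by
  unfold NN; omega

theorem NN_spec (C θ : ℝ) (hθ1 : 1/4 ≤ θ) (hθ2 : θ < 1/2) (hC : 1 ≤ C) (Λ : ℕ) (hΛ : 1 ≤ Λ) :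
    C * ((2 * (NN C θ Λ)^2 + (NN C θ Λ) * Λ : ℕ) : ℝ) ^ θ < (NN C θ Λ) * Real.log 2 := by
  have hθ0 : (0:ℝ) ≤ θ := by linarith
  have hθle1 : θ ≤ 1 := by linarith
  have h12θ : (0:ℝ) < 1 - 2*θ := by linarith
  have h1θ : (0:ℝ) < 1 - θ := by linarith
  have hC0 : (0:ℝ) < C := by linarith
  set N := NN C θ Λ with hN
  set n : ℝ := (N : ℝ) with hn
  set lam : ℝ := (Λ : ℝ) with hlam
  have hlam1 : 1 ≤ lam := by rw [hlam]; exact_mod_cast hΛ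
  have hlam0 : 0 ≤ lam := by linarith
  have hn1 : 1 ≤ n := by rw [hn]; exact_mod_cast NN_pos C θ Λ
  have hn0 : 0 < n := by linarith
  have hA1 : (8*C)^(1/(1-2*θ)) ≤ n := by
    have h1 : ((⌈(8*C)^(1/(1-2*θ))⌉₊ : ℕ) : ℝ) ≤ n := by
      have h2 : ⌈(8*C)^(1/(1-2*θ))⌉₊ ≤ N := by rw [hN]; unfold NN; omega
      rw [hn]; exact_mod_cast h2
    exact le_trans (Nat.le_ceil _) h1
  have hA2 : (4*C)^(1/(1-θ)) * lam^(θ/(1-θ)) ≤ n := by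
    have h1 : ((⌈(4*C)^(1/(1-θ)) * (Λ:ℝ)^(θ/(1-θ))⌉₊ : ℕ) : ℝ) ≤ n := by
      have h2 : ⌈(4*C)^(1/(1-θ)) * (Λ:ℝ)^(θ/(1-θ))⌉₊ ≤ N := by rw [hN]; unfold NN; omega
      rw [hn]; exact_mod_cast h2
    exact le_trans (Nat.le_ceil _) h1
  -- cast of M
  have hM : ((2 * N^2 + N * Λ : ℕ) : ℝ) = 2*n^2 + n*lam := by push_cast; ring
  rw [hM]
  -- subadditivity
  have hsub : (2*n^2 + n*lam)^θ ≤ (2*n^2)^θ + (n*lam)^θ :=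
    rpow_add_le (by positivity) (by positivity) hθ0 hθle1
  -- first term
  have hterm1 : C * (2*n^2)^θ ≤ n/4 := by
    have e1 : (2*n^2)^θ = 2^θ * (n^2)^θ := Real.mul_rpow (by norm_num) (by positivity)
    have e2 : (n^2:ℝ)^θ = n^(2*θ) := by
      rw [← Real.rpow_natCast n 2, ← Real.rpow_mul (le_of_lt hn0)]
      norm_num
    have e3 : (2:ℝ)^θ ≤ 2 := by
      calc (2:ℝ)^θ ≤ 2^(1:ℝ) := Real.rpow_le_rpow_of_exponent_le (by norm_num) hθle1
      _ = 2 := Real.rpow_one 2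
    have key : 8*C ≤ n^(1-2*θ) := by
      calc 8*C = ((8*C)^(1/(1-2*θ)))^(1-2*θ) := by
            rw [← Real.rpow_mul (by linarith), one_div_mul_cancel (ne_of_gt h12θ), Real.rpow_one]
      _ ≤ n^(1-2*θ) := Real.rpow_le_rpow (by positivity) hA1 (le_of_lt h12θ)
    have hsplit : n = n^(2*θ) * n^(1-2*θ) := by
      rw [← Real.rpow_add hn0]; norm_num
    have h2θ0 : (0:ℝ) ≤ n^(2*θ) := Real.rpow_nonneg (le_of_lt hn0) _
    calc C * (2*n^2)^θ = C * (2^θ * n^(2*θ)) := by rw [e1, e2]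
    _ ≤ C * (2 * n^(2*θ)) := by
        apply mul_le_mul_of_nonneg_left _ (le_of_lt hC0)
        exact mul_le_mul_of_nonneg_right e3 h2θ0
    _ = (8*C) * n^(2*θ) / 4 := by ring
    _ ≤ n^(1-2*θ) * n^(2*θ) / 4 := by
        apply div_le_div_of_nonneg_right _ (by norm_num)
        exact mul_le_mul_of_nonneg_right key h2θ0
    _ = n/4 := by rw [← Real.rpow_add hn0]; norm_num
  -- second term
  have hterm2 : C * (n*lam)^θ ≤ n/4 := by
    have e1 : (n*lam)^θ = n^θ * lam^θ := Real.mul_rpow (le_of_lt hn0) hlam0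
    have key : 4*C*lam^θ ≤ n^(1-θ) := by
      have base : ((4*C)^(1/(1-θ)) * lam^(θ/(1-θ)))^(1-θ) = 4*C*lam^θ := by
        rw [Real.mul_rpow (by positivity) (Real.rpow_nonneg hlam0 _),
          ← Real.rpow_mul (by linarith), ← Real.rpow_mul hlam0,
          one_div_mul_cancel (ne_of_gt h1θ), div_mul_cancel₀ _ (ne_of_gt h1θ), Real.rpow_one]
      calc 4*C*lam^θ = ((4*C)^(1/(1-θ)) * lam^(θ/(1-θ)))^(1-θ) := base.symm
      _ ≤ n^(1-θ) := Real.rpow_le_rpow (by positivity) hA2 (le_of_lt h1θ)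
    have hθn0 : (0:ℝ) ≤ n^θ := Real.rpow_nonneg (le_of_lt hn0) _
    have hsplit : n = n^θ * n^(1-θ) := by
      rw [← Real.rpow_add hn0]; norm_num
    calc C * (n*lam)^θ = (C * lam^θ) * n^θ := by rw [e1]; ring
    _ ≤ (n^(1-θ)/4) * n^θ := by
        apply mul_le_mul_of_nonneg_right _ hθn0
        linarith
    _ = n/4 := by
        rw [div_mul_eq_mul_div, ← Real.rpow_add hn0]
        norm_num
  have hlog : (0.6931471803 : ℝ) < Real.log 2 := Real.log_two_gt_d9
  calc C * (2*n^2 + n*lam)^θ ≤ C * ((2*n^2)^θ + (n*lam)^θ) := by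
        apply mul_le_mul_of_nonneg_left hsub (le_of_lt hC0)
  _ = C * (2*n^2)^θ + C * (n*lam)^θ := by ring
  _ ≤ n/4 + n/4 := add_le_add hterm1 hterm2
  _ = n/2 := by ring
  _ < n * Real.log 2 := by nlinarith

end DSG

namespace DSG

variable {G : Type u} [Group G]

theorem growth_lt_pow {X : Set G} (C θ : ℝ) (hθ1 : 1/4 ≤ θ) (hθ2 : θ < 1/2) (hC : 1 ≤ C)
    (hgrowth : ∀ n : ℕ, 0 < n → (growth X n : ℝ) ≤ Real.exp (C * (n:ℝ)^θ)) (Λ : ℕ) (hΛ : 1 ≤ Λ) :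
    growth X (2 * (NN C θ Λ)^2 + (NN C θ Λ) * Λ) < 2 ^ (NN C θ Λ) := by
  set N := NN C θ Λ with hN
  have hNpos := NN_pos C θ Λ
  set M := 2 * N^2 + N * Λ with hM
  have hMpos : 0 < M := by
    have : 1 ≤ N := hNpos
    positivity
  have h1 : (growth X M : ℝ) ≤ Real.exp (C * (M:ℝ)^θ) := hgrowth M hMpos
  have h2 : C * (M:ℝ)^θ < N * Real.log 2 := NN_spec C θ hθ1 hθ2 hC Λ hΛ
  have h3 : Real.exp ((N:ℝ) * Real.log 2) = (2:ℝ)^N := by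
    rw [Real.exp_nat_mul, Real.exp_log (by norm_num : (0:ℝ) < 2)]
  have h4 : (growth X M : ℝ) < ((2^N : ℕ) : ℝ) := by
    push_cast
    calc (growth X M : ℝ) ≤ Real.exp (C * (M:ℝ)^θ) := h1
    _ < Real.exp ((N:ℝ) * Real.log 2) := Real.exp_lt_exp.mpr h2
    _ = (2:ℝ)^N := h3
  exact_mod_cast h4

end DSG

namespace DSG

variable {G : Type u} [Group G]
theorem reduction {X : Set G} (hXfin : X.Finite) (hX : Subgroup.closure X = ⊤)
    (C θ : ℝ) (hθ1 : 1/4 ≤ θ) (hθ2 : θ < 1/2) (hC : 1 ≤ C)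
    (hgrowth : ∀ n : ℕ, 0 < n → (growth X n : ℝ) ≤ Real.exp (C * (n:ℝ)^θ))
    (c : G) (Λ : ℕ) (hΛ : 1 ≤ Λ) (hc : wordLength X c ≤ Λ) (v : G) :
    v * c * v⁻¹ ∈ Subgroup.closure
      {g : G | ∃ u : G, wordLength X u ≤ NN C θ Λ - 1 ∧ g = u * c * u⁻¹} := by
  classical
  set N := NN C θ Λ with hN
  have hNpos := NN_pos C θ Λ
  set S := {g : G | ∃ u : G, wordLength X u ≤ N - 1 ∧ g = u * c * u⁻¹} with hS
  have key : ∀ t : ℕ, ∀ l : List G, Ok X l → l.length ≤ t →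
      l.prod * c * (l.prod)⁻¹ ∈ Subgroup.closure S := by
    intro t
    induction t using Nat.strong_induction_on with
    | _ t IH =>
      intro l hOk hlen
      by_cases hshort : l.length ≤ N - 1
      · refine Subgroup.subset_closure ⟨l.prod, ?_, rfl⟩
        exact le_trans (wl_le hOk rfl) hshort
      · have hlN : N ≤ l.length := by omega
        set p : ℕ → G := fun j =>
          (l.drop (l.length - j)).prod * c * ((l.drop (l.length - j)).prod)⁻¹ with hp
        have hOkdrop : ∀ n, Ok X (l.drop n) := fun n x hx => hOk x (List.drop_subset n l hx)
        have hOktake : ∀ n, Ok X (l.take n) := fun n x hx => hOk x (List.take_subset n l hx)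
        have hplen : ∀ j, 1 ≤ j → wordLength X (p j) ≤ 2*j + Λ := by
          intro j _
          simp only [hp]
          have h1 : wordLength X ((l.drop (l.length - j)).prod) ≤ j := by
            have := wl_le (hOkdrop (l.length - j)) rfl
            rw [List.length_drop] at this
            omega
          have := wl_conj hX ((l.drop (l.length - j)).prod) c
          omega
        have hDlen : ∀ A : Finset ℕ, A ⊆ Finset.Icc 1 N →
            wordLength X (D p N A) ≤ 2*N^2 + N*Λ :=
          fun A _ => D_length hX p Λ hplen N A
        obtain ⟨m, hm1, hmN, hrel⟩ := exists_relation hXfin hX p N (2*N^2 + N*Λ) hDlen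
          (growth_lt_pow C θ hθ1 hθ2 hC hgrowth Λ hΛ)
        set σ := (l.take (l.length - m)).prod with hσ
        set τ := (l.drop (l.length - m)).prod with hτ
        have hστ : σ * τ = l.prod := by
          rw [hσ, hτ, ← List.prod_append, List.take_append_drop]
        -- conjugate the relation by σ
        set φ := MulAut.conj σ with hφ
        have hconjmem : σ * (p m) * σ⁻¹ ∈ Subgroup.closure
            ((φ : G →* G) '' {g : G | ∃ j, 1 ≤ j ∧ j ≤ m - 1 ∧ g = p j}) := by
          rw [← MonoidHom.map_closure]
          exact ⟨p m, hrel, rfl⟩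
        have hgensub : ((φ : G →* G) '' {g : G | ∃ j, 1 ≤ j ∧ j ≤ m - 1 ∧ g = p j}) ⊆
            (Subgroup.closure S : Set G) := by
          rintro _ ⟨g, ⟨j, hj1, hj2, rfl⟩, rfl⟩
          have hlist : Ok X (l.take (l.length - m) ++ l.drop (l.length - j)) := by
            intro x hx
            rcases List.mem_append.mp hx with h | h
            · exact hOktake _ x h
            · exact hOkdrop _ x h
          have hlen' : (l.take (l.length - m) ++ l.drop (l.length - j)).length ≤ l.length - m + j := by
            rw [List.length_append, List.length_take, List.length_drop]
            omega
          have hlt : l.length - m + j < t := by omega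
          have hmem := IH (l.length - m + j) hlt
            (l.take (l.length - m) ++ l.drop (l.length - j)) hlist hlen'
          have heq : (l.take (l.length - m) ++ l.drop (l.length - j)).prod = σ * (l.drop (l.length - j)).prod := by
            rw [List.prod_append]
          rw [heq] at hmem
          have : (φ : G →* G) (p j) =
              (σ * (l.drop (l.length - j)).prod) * c * (σ * (l.drop (l.length - j)).prod)⁻¹ := by
            show σ * (p j) * σ⁻¹ = _
            rw [hp]
            group
          rw [this]
          exact hmem
        have h2 : Subgroup.closure ((φ : G →* G) '' {g : G | ∃ j, 1 ≤ j ∧ j ≤ m - 1 ∧ g = p j}) ≤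
            Subgroup.closure S := (Subgroup.closure_le _).mpr hgensub
        have hfinal : σ * (p m) * σ⁻¹ ∈ Subgroup.closure S := h2 hconjmem
        have : l.prod * c * (l.prod)⁻¹ = σ * (p m) * σ⁻¹ := by
          rw [hp, ← hστ, hτ]
          group
        rw [this]
        exact hfinal
  obtain ⟨l, hOk, hprod⟩ := exists_ok_list hX v
  rw [← hprod]
  exact key l.length l hOk (le_refl _)

end DSG

namespace DSG

open scoped commutatorElement

variable {G : Type u} [Group G]

/-- The radius sequence. -/
noncomputable def MM (C θ : ℝ) : ℕ → ℕ
  | 0 => 1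
  | k+1 => 4 * MM C θ k + 2 * (NN C θ (4 * MM C θ k) - 1)

theorem MM_pos (C θ : ℝ) (k : ℕ) : 1 ≤ MM C θ k := by
  cases k with
  | zero => exact le_refl _
  | succ k => show 1 ≤ 4 * MM C θ k + _; have : 1 ≤ MM C θ k := MM_pos C θ k; omega

theorem invariant (X : Finset G) (hclos : Subgroup.closure (X : Set G) = ⊤)
    (C θ : ℝ) (hθ1 : 1/4 ≤ θ) (hθ2 : θ < 1/2) (hC : 1 ≤ C)
    (hgrowth : ∀ n : ℕ, 0 < n → (growth (X : Set G) n : ℝ) ≤ Real.exp (C * (n:ℝ)^θ)) :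
    ∀ k : ℕ, derivedSeries G k =
      Subgroup.closure {g : G | g ∈ derivedSeries G k ∧ wordLength (X : Set G) g ≤ MM C θ k} := by
  intro k
  induction k with
  | zero =>
    apply le_antisymm
    · rw [derivedSeries_zero, ← hclos]
      apply Subgroup.closure_mono
      intro x hx
      refine ⟨Subgroup.subset_closure hx, ?_⟩
      have : Ok (X : Set G) [x] := by
        intro y hy
        rw [List.mem_singleton] at hy
        subst hy
        exact Or.inl hx
      have h := wl_le this (List.prod_singleton)
      simpa [MM] using h
    · exact le_top
  | succ k IH =>
    set Sk := {g : G | g ∈ derivedSeries G k ∧ wordLength (X : Set G) g ≤ MM C θ k} with hSk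
    set Sk1 := {g : G | g ∈ derivedSeries G (k+1) ∧ wordLength (X : Set G) g ≤ MM C θ (k+1)}
      with hSk1
    set T := {g : G | ∃ a b v : G, a ∈ Sk ∧ b ∈ Sk ∧ g = v * ⁅a, b⁆ * v⁻¹} with hT
    have hTconj : ∀ g : G, ∀ x ∈ T, g * x * g⁻¹ ∈ T := by
      rintro g x ⟨a, b, v, ha, hb, rfl⟩
      exact ⟨a, b, g * v, ha, hb, by group⟩
    have hNnormal : (Subgroup.closure T).Normal := by
      constructor
      intro n hn g
      have hle : Subgroup.closure ((MulAut.conj g : G →* G) '' T) ≤ Subgroup.closure T := by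
        apply (Subgroup.closure_le _).mpr
        rintro _ ⟨x, hx, rfl⟩
        exact Subgroup.subset_closure (hTconj g x hx)
      have hmem : (MulAut.conj g : G →* G) n ∈
          Subgroup.closure ((MulAut.conj g : G →* G) '' T) := by
        rw [← MonoidHom.map_closure]
        exact ⟨n, hn, rfl⟩
      have := hle hmem
      simpa using this
    -- commutator of ball elements has length ≤ 4 * MM C θ k
    have hcommlen : ∀ a b : G, a ∈ Sk → b ∈ Sk →
        wordLength (X : Set G) ⁅a, b⁆ ≤ 4 * MM C θ k := by
      intro a b ha hb
      have h1 := wl_mul hclos a b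
      have h2 := wl_mul hclos (a * b) a⁻¹
      have h3 := wl_mul hclos (a * b * a⁻¹) b⁻¹
      have h4 := wl_inv hclos a
      have h5 := wl_inv hclos b
      have ha' := ha.2
      have hb' := hb.2
      rw [commutatorElement_def]
      omega
    -- (1) closure T ≤ closure Sk1
    have h1 : Subgroup.closure T ≤ Subgroup.closure Sk1 := by
      apply (Subgroup.closure_le _).mpr
      rintro _ ⟨a, b, v, ha, hb, rfl⟩
      have hcmem : ⁅a, b⁆ ∈ derivedSeries G (k+1) := by
        rw [derivedSeries_succ]
        exact Subgroup.commutator_mem_commutator ha.1 hb.1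
      have hred := reduction (X.finite_toSet) hclos C θ hθ1 hθ2 hC hgrowth
        ⁅a, b⁆ (4 * MM C θ k) (by have := MM_pos C θ k; omega) (hcommlen a b ha hb) v
      refine (Subgroup.closure_le _).mpr ?_ hred
      rintro _ ⟨u, hu, rfl⟩
      apply Subgroup.subset_closure
      constructor
      · exact (derivedSeries_normal G (k+1)).conj_mem _ hcmem u
      · have hconj := wl_conj hclos u ⁅a, b⁆
        have hc4 := hcommlen a b ha hb
        have : MM C θ (k+1) = 4 * MM C θ k + 2 * (NN C θ (4 * MM C θ k) - 1) := rfl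
        omega
    -- (2) derivedSeries (k+1) ≤ closure T
    have h2 : derivedSeries G (k+1) ≤ Subgroup.closure T := by
      haveI := hNnormal
      set π := QuotientGroup.mk' (Subgroup.closure T) with hπ
      have hker : π.ker = Subgroup.closure T := QuotientGroup.ker_mk' _
      have hcomm : ∀ x ∈ π '' Sk, ∀ y ∈ π '' Sk, x * y = y * x := by
        rintro _ ⟨a, ha, rfl⟩ _ ⟨b, hb, rfl⟩
        have : ⁅π a, π b⁆ = 1 := by
          rw [← map_commutatorElement]
          rw [← MonoidHom.mem_ker, hker]
          exact Subgroup.subset_closure ⟨a, b, 1, ha, hb, by group⟩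
        have := commutatorElement_eq_one_iff_commute.mp this
        exact this.eq
      set K := Subgroup.map π (derivedSeries G k) with hK
      have hKcl : K = Subgroup.closure (π '' Sk) := by
        rw [hK, IH, MonoidHom.map_closure]
      have habel : ∀ x ∈ K, ∀ y ∈ K, x * y = y * x := by
        have hstep1 : ∀ y ∈ π '' Sk, K ≤ Subgroup.centralizer {y} := by
          intro y hy
          rw [hKcl]
          apply (Subgroup.closure_le _).mpr
          intro x hx
          rw [SetLike.mem_coe, Subgroup.mem_centralizer_iff]
          intro h hh
          rw [Set.mem_singleton_iff] at hh
          rw [hh]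
          exact hcomm y hy x hx
        have hstep2 : K ≤ Subgroup.centralizer (K : Set _) := by
          have hstep2' : Subgroup.closure (π '' Sk) ≤ Subgroup.centralizer (K : Set _) := by
            apply (Subgroup.closure_le _).mpr
            intro y hy
            rw [SetLike.mem_coe, Subgroup.mem_centralizer_iff]
            intro x hx
            have h := hstep1 y hy (SetLike.mem_coe.mp hx)
            rw [Subgroup.mem_centralizer_iff] at h
            exact (h y (Set.mem_singleton _)).symm
          calc K = Subgroup.closure (π '' Sk) := hKcl
          _ ≤ _ := hstep2'
        intro x hx y hy
        have h := hstep2 hy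
        rw [Subgroup.mem_centralizer_iff] at h
        exact h x (SetLike.mem_coe.mpr hx)
      have hbot : Subgroup.map π (derivedSeries G (k+1)) = ⊥ := by
        rw [derivedSeries_succ, Subgroup.map_commutator]
        rw [eq_bot_iff]
        apply Subgroup.commutator_le.mpr
        intro g1 hg1 g2 hg2
        rw [Subgroup.mem_bot]
        rw [commutatorElement_eq_one_iff_commute]
        exact (habel g1 hg1 g2 hg2)
      rw [← hker]
      exact (Subgroup.map_eq_bot_iff _).mp hbot
    -- combine
    apply le_antisymm
    · exact le_trans h2 h1
    · apply (Subgroup.closure_le _).mpr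
      intro g hg
      exact hg.1

end DSG

namespace DSG

theorem NN_le (C θ : ℝ) (hθ1 : 1/4 ≤ θ) (hθ2 : θ < 1/2) (hC : 1 ≤ C) (Λ : ℕ) :
    (NN C θ Λ : ℝ) ≤ (8*C)^(1/(1-2*θ)) + (4*C)^(1/(1-θ)) * (Λ:ℝ)^(θ/(1-θ)) + 3 := by
  have h1 : (0:ℝ) ≤ (8*C)^(1/(1-2*θ)) := by positivity
  have h2 : (0:ℝ) ≤ (4*C)^(1/(1-θ)) * (Λ:ℝ)^(θ/(1-θ)) := by positivity
  have c1 := Nat.ceil_lt_add_one h1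
  have c2 := Nat.ceil_lt_add_one h2
  unfold NN
  push_cast
  linarith

theorem MM_le (C θ : ℝ) (hθ1 : 1/4 ≤ θ) (hθ2 : θ < 1/2) (hC : 1 ≤ C) :
    ∃ C₂ : ℝ, 0 < C₂ ∧ ∀ k : ℕ, (MM C θ k : ℝ) ≤ C₂ * 4 ^ k := by
  have hθ0 : (0:ℝ) < θ := by linarith
  have h1θ : (0:ℝ) < 1 - θ := by linarith
  obtain ⟨α, hα⟩ : ∃ x : ℝ, x = θ/(1-θ) := ⟨_, rfl⟩
  have hα0 : 0 < α := by rw [hα]; positivity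
  have hα1 : α < 1 := by rw [hα, div_lt_one h1θ]; linarith
  obtain ⟨A₁, hA₁⟩ : ∃ x : ℝ, x = (8*C)^(1/(1-2*θ)) := ⟨_, rfl⟩
  obtain ⟨A₂, hA₂⟩ : ∃ x : ℝ, x = (4*C)^(1/(1-θ)) := ⟨_, rfl⟩
  have hA₁0 : 0 < A₁ := by rw [hA₁]; positivity
  have hA₂0 : 0 < A₂ := by rw [hA₂]; positivity
  obtain ⟨ρ, hρ⟩ : ∃ x : ℝ, x = (4:ℝ)^α := ⟨_, rfl⟩
  have hρ1 : 1 ≤ ρ := by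
    rw [hρ]; exact Real.one_le_rpow (by norm_num) (le_of_lt hα0)
  have hρ4 : ρ < 4 := by
    rw [hρ]
    calc (4:ℝ)^α < 4^(1:ℝ) := Real.rpow_lt_rpow_of_exponent_lt (by norm_num) hα1
    _ = 4 := Real.rpow_one 4
  have hρ0 : 0 < ρ := by linarith
  obtain ⟨A₄, hA₄⟩ : ∃ x : ℝ, x = 2*A₁ + 6 + 8*A₂ := ⟨_, rfl⟩
  have hA₄0 : 0 < A₄ := by rw [hA₄]; positivity
  have hBpos : 0 ≤ 4*A₄/(4-ρ) := div_nonneg (by linarith) (by linarith)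
  obtain ⟨B, hB⟩ : ∃ x : ℝ, x = (4*A₄/(4-ρ))^(1/(1-α)) := ⟨_, rfl⟩
  obtain ⟨C₂, hC₂⟩ : ∃ x : ℝ, x = max 1 B := ⟨_, rfl⟩
  have hC₂1 : 1 ≤ C₂ := by rw [hC₂]; exact le_max_left _ _
  have hC₂0 : 0 < C₂ := by linarith
  have hCα0 : 0 ≤ C₂^α := Real.rpow_nonneg (le_of_lt hC₂0) _
  have hkey : 4*A₄*C₂^α ≤ C₂*(4-ρ) := by
    have hBle : 4*A₄/(4-ρ) ≤ C₂^(1-α) := by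
      have e1 : B^(1-α) = 4*A₄/(4-ρ) := by
        rw [hB, ← Real.rpow_mul hBpos, one_div_mul_cancel (by linarith : (1:ℝ)-α ≠ 0),
          Real.rpow_one]
      calc 4*A₄/(4-ρ) = B^(1-α) := e1.symm
      _ ≤ C₂^(1-α) := by
          apply Real.rpow_le_rpow _ _ (by linarith)
          · rw [hB]; exact Real.rpow_nonneg hBpos _
          · rw [hC₂]; exact le_max_right _ _
    have hsplit : C₂^(1-α) * C₂^α = C₂ := by
      rw [← Real.rpow_add hC₂0]; norm_num
    have h5 : (4*A₄/(4-ρ)) * C₂^α ≤ C₂ := by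
      calc (4*A₄/(4-ρ)) * C₂^α ≤ C₂^(1-α) * C₂^α := mul_le_mul_of_nonneg_right hBle hCα0
      _ = C₂ := hsplit
    have h6 : ((4*A₄/(4-ρ)) * C₂^α) * (4-ρ) = 4*A₄*C₂^α := by
      rw [mul_right_comm, div_mul_cancel₀ _ (by linarith : (4:ℝ)-ρ ≠ 0)]
    calc 4*A₄*C₂^α = ((4*A₄/(4-ρ)) * C₂^α) * (4-ρ) := h6.symm
    _ ≤ C₂*(4-ρ) := mul_le_mul_of_nonneg_right h5 (by linarith)
  have hmain : ∀ k : ℕ, (MM C θ k : ℝ) ≤ C₂ * (2 * 4^k - ρ^k) := by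
    intro k
    induction k with
    | zero =>
      have h1 : MM C θ 0 = 1 := rfl
      rw [h1]
      norm_num
      linarith
    | succ k IH =>
      have hm1 : (1:ℝ) ≤ (MM C θ k : ℝ) := by exact_mod_cast MM_pos C θ k
      have hm0 : (0:ℝ) ≤ (MM C θ k : ℝ) := by linarith
      have hρk1 : 1 ≤ ρ^k := one_le_pow₀ hρ1
      have hρk0 : 0 < ρ^k := by positivity
      have h4k0 : (0:ℝ) < 4^k := by positivity
      have hpos1 : (0:ℝ) ≤ C₂*ρ^k := by positivity
      have hm2 : (MM C θ k : ℝ) ≤ 2*C₂*4^k := by linarith [IH]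
      have hmα0 : 0 ≤ (MM C θ k : ℝ)^α := Real.rpow_nonneg hm0 _
      have hstep : (MM C θ (k+1) : ℝ) ≤ 4*(MM C θ k : ℝ) + A₄*(1 + (MM C θ k : ℝ)^α) := by
        have hrec : MM C θ (k+1) = 4 * MM C θ k + 2 * (NN C θ (4 * MM C θ k) - 1) := rfl
        have hsub : ((NN C θ (4 * MM C θ k) - 1 : ℕ) : ℝ) ≤ (NN C θ (4 * MM C θ k) : ℝ) := by
          exact_mod_cast Nat.sub_le _ _
        have hNNle := NN_le C θ hθ1 hθ2 hC (4 * MM C θ k)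
        rw [← hA₁, ← hA₂, ← hα] at hNNle
        have hcast : ((4 * MM C θ k : ℕ) : ℝ) = 4 * (MM C θ k : ℝ) := by push_cast; ring
        have h4mα : ((4 * MM C θ k : ℕ) : ℝ)^α ≤ 4 * (MM C θ k : ℝ)^α := by
          rw [hcast, Real.mul_rpow (by norm_num) hm0]
          apply mul_le_mul_of_nonneg_right _ hmα0
          calc (4:ℝ)^α ≤ 4^(1:ℝ) :=
                Real.rpow_le_rpow_of_exponent_le (by norm_num) (le_of_lt hα1)
          _ = 4 := Real.rpow_one 4
        have hNN2 : (NN C θ (4 * MM C θ k) : ℝ) ≤ A₁ + 4*A₂*(MM C θ k : ℝ)^α + 3 := by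
          have h2' : A₂ * ((4 * MM C θ k : ℕ) : ℝ)^α ≤ A₂ * (4*(MM C θ k : ℝ)^α) :=
            mul_le_mul_of_nonneg_left h4mα (le_of_lt hA₂0)
          calc (NN C θ (4 * MM C θ k) : ℝ)
              ≤ A₁ + A₂ * ((4 * MM C θ k : ℕ) : ℝ)^α + 3 := hNNle
          _ ≤ A₁ + 4*A₂*(MM C θ k : ℝ)^α + 3 := by linarith
        have hle := le_trans hsub hNN2
        calc (MM C θ (k+1) : ℝ)
            = ((4 * MM C θ k + 2 * (NN C θ (4 * MM C θ k) - 1) : ℕ) : ℝ) := by rw [hrec]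
        _ = 4*(MM C θ k : ℝ) + 2*((NN C θ (4 * MM C θ k) - 1 : ℕ) : ℝ) := by push_cast; ring
        _ ≤ 4*(MM C θ k : ℝ) + 2*(A₁ + 4*A₂*(MM C θ k : ℝ)^α + 3) := by linarith
        _ = 4*(MM C θ k : ℝ) + (2*A₁ + 6) + 8*A₂*(MM C θ k : ℝ)^α := by ring
        _ ≤ 4*(MM C θ k : ℝ) + A₄*(1 + (MM C θ k : ℝ)^α) := by
            rw [hA₄]; nlinarith
      have hmαle : (MM C θ k : ℝ)^α ≤ 2*C₂^α*ρ^k := by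
        have e1 : ((4:ℝ)^k)^α = ρ^k := by
          rw [← Real.rpow_natCast (4:ℝ) k, ← Real.rpow_mul (by norm_num), mul_comm,
            Real.rpow_mul (by norm_num), Real.rpow_natCast, hρ]
        have e2 : (MM C θ k : ℝ)^α ≤ (2*C₂*4^k)^α :=
          Real.rpow_le_rpow hm0 hm2 (le_of_lt hα0)
        have e3 : ((2*C₂)*(4:ℝ)^k)^α = (2*C₂)^α * ρ^k := by
          rw [Real.mul_rpow (by positivity) (by positivity), e1]
        have e4 : (2*C₂ : ℝ)^α ≤ 2*C₂^α := by
          rw [Real.mul_rpow (by norm_num) (le_of_lt hC₂0)]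
          apply mul_le_mul_of_nonneg_right _ hCα0
          calc (2:ℝ)^α ≤ 2^(1:ℝ) :=
                Real.rpow_le_rpow_of_exponent_le (by norm_num) (le_of_lt hα1)
          _ = 2 := Real.rpow_one 2
        have e5 : (2*C₂)^α * ρ^k ≤ (2*C₂^α) * ρ^k :=
          mul_le_mul_of_nonneg_right e4 (le_of_lt hρk0)
        calc (MM C θ k : ℝ)^α ≤ ((2*C₂)*(4:ℝ)^k)^α := by
              rw [show (2*C₂)*(4:ℝ)^k = 2*C₂*4^k from by ring]; exact e2
        _ = (2*C₂)^α * ρ^k := e3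
        _ ≤ 2*C₂^α*ρ^k := by linarith [e5]
      have hCα1 : 1 ≤ C₂^α := Real.one_le_rpow hC₂1 (le_of_lt hα0)
      have hA4le : A₄*(1 + (MM C θ k : ℝ)^α) ≤ C₂*(4-ρ)*ρ^k := by
        have t1 : (1:ℝ) ≤ C₂^α * ρ^k := by
          calc (1:ℝ) ≤ ρ^k := hρk1
          _ ≤ C₂^α * ρ^k := le_mul_of_one_le_left (le_of_lt hρk0) hCα1
        have h1 : 1 + (MM C θ k : ℝ)^α ≤ 3*C₂^α*ρ^k := by linarith [t1, hmαle]
        calc A₄*(1 + (MM C θ k : ℝ)^α) ≤ A₄*(3*C₂^α*ρ^k) :=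
              mul_le_mul_of_nonneg_left h1 (le_of_lt hA₄0)
        _ ≤ (4*A₄*C₂^α)*ρ^k := by
            have hpos2 : (0:ℝ) ≤ A₄*(C₂^α*ρ^k) := by positivity
            linarith [hpos2]
        _ ≤ (C₂*(4-ρ))*ρ^k := mul_le_mul_of_nonneg_right hkey (le_of_lt hρk0)
        _ = C₂*(4-ρ)*ρ^k := by ring
      calc (MM C θ (k+1) : ℝ) ≤ 4*(MM C θ k : ℝ) + A₄*(1+(MM C θ k : ℝ)^α) := hstep
      _ ≤ 4*(C₂*(2*4^k - ρ^k)) + C₂*(4-ρ)*ρ^k := by linarith [hA4le, IH]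
      _ = C₂ * (2*4^(k+1) - ρ^(k+1)) := by ring
  refine ⟨2*C₂, by linarith, fun k => ?_⟩
  have h := hmain k
  have hpos : (0:ℝ) ≤ C₂*ρ^k := by positivity
  linarith [h]

end DSG

/-- For all `θ < 1/2` and `C ≥ 1` there is a constant `C₂ > 0` such that: whenever
`G = ⟨X⟩` satisfies `γ_X(n) ≤ exp(C n^θ)` for all `n > 0`, each derived subgroup
`G^(k)` is generated by a finite set `X_k` with `ℓ_X(X_k) ≤ C₂ · 4^k`. -/
theorem derived_series_generators (θ C : ℝ) (hθ : θ < 1 / 2) (hC : 1 ≤ C) :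
    ∃ C₂ : ℝ, 0 < C₂ ∧
      ∀ (G : Type u) [Group G] (X : Finset G),
        Subgroup.closure (X : Set G) = ⊤ →
        (∀ n : ℕ, 0 < n → (growth (X : Set G) n : ℝ) ≤ Real.exp (C * (n : ℝ) ^ θ)) →
        ∀ k : ℕ, ∃ Xk : Finset G,
          Subgroup.closure (Xk : Set G) = derivedSeries G k ∧
          ((Xk.sup (wordLength (X : Set G)) : ℕ) : ℝ) ≤ C₂ * 4 ^ k := by
  classical
  set θ' := max θ (1/4) with hθ'
  have hθ'1 : 1/4 ≤ θ' := le_max_right _ _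
  have hθ'2 : θ' < 1/2 := max_lt hθ (by norm_num)
  obtain ⟨C₂, hC₂0, hC₂⟩ := DSG.MM_le C θ' hθ'1 hθ'2 hC
  refine ⟨C₂, hC₂0, ?_⟩
  intro G _ X hclos hgrowth k
  have hgrowth' : ∀ n : ℕ, 0 < n →
      (growth (X : Set G) n : ℝ) ≤ Real.exp (C * (n : ℝ) ^ θ') := by
    intro n hn
    refine le_trans (hgrowth n hn) (Real.exp_le_exp.mpr ?_)
    apply mul_le_mul_of_nonneg_left _ (by linarith : (0:ℝ) ≤ C)
    apply Real.rpow_le_rpow_of_exponent_le _ (le_max_left _ _)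
    exact_mod_cast hn
  have hinv := DSG.invariant X hclos C θ' hθ'1 hθ'2 hC hgrowth' k
  have hfin : {g : G | g ∈ derivedSeries G k ∧ wordLength (X : Set G) g ≤ DSG.MM C θ' k}.Finite :=
    (DSG.ball_finite X.finite_toSet hclos (DSG.MM C θ' k)).subset (fun g hg => hg.2)
  refine ⟨hfin.toFinset, ?_, ?_⟩
  · rw [Set.Finite.coe_toFinset]
    exact hinv.symm
  · have hsup : hfin.toFinset.sup (wordLength (X : Set G)) ≤ DSG.MM C θ' k := by
      apply Finset.sup_le
      intro g hg
      rw [Set.Finite.mem_toFinset] at hg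
      exact hg.2
    calc ((hfin.toFinset.sup (wordLength (X : Set G)) : ℕ) : ℝ)
        ≤ (DSG.MM C θ' k : ℝ) := by exact_mod_cast hsup
    _ ≤ C₂ * 4 ^ k := hC₂ k
end
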